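/- arXiv:math/0512048 — 6 statements merged into one kernel-verified Lean document; each statement's English description precedes it below -/
import Mathlib

section
/- Let f be a continuous 2π-periodic function, 0 < h < π, and s ≥ 2 with sh < π. Then the function x ↦ (f * B_h^s)(x) is differentiable and its derivative satisfies d/dx (f * B_h^s)(x) = (2h)^{−1} [ (f * B_h^{s−1})(x+h) − (f * B_h^{s−1})(x−h) ] for all x. -/
open scoped Real BigOperators
open MeasureTheory

noncomputable section

/-- Representative of `x` in `[-π, π)` on the circle `ℝ/2πℤ`. -/
def rep (x : ℝ) : ℝ := x - 2 * Real.pi * ⌊(x + Real.pi) / (2 * Real.pi)⌋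

/-- The basic averaging kernel `B_h^1` on the circle: `1/(2h)` on `[-h,h]`, `0` elsewhere. -/
def B1 (h : ℝ) (x : ℝ) : ℝ := if |rep x| ≤ h then 1 / (2 * h) else 0

/-- Convolution of real functions over the circle: `(f*g)(x) = ∫_T f(u) g(x-u) du`. -/
def convR (f g : ℝ → ℝ) (x : ℝ) : ℝ := ∫ u in (-Real.pi)..Real.pi, f u * g (x - u)

/-- The iterated kernels `B_h^s`, with `B_h^1 = B1 h` and `B_h^s = B_h^1 * B_h^{s-1}`. -/
def B (h : ℝ) : ℕ → ℝ → ℝ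
  | 0 => fun _ => 0
  | 1 => B1 h
  | (s + 2) => convR (B1 h) (B h (s + 1))

/-- Convolution `(f * g)(x) = ∫_T f(u) g(x-u) du` of a complex function `f`
with a real kernel `g`. -/
def convC (g : ℝ → ℝ) (f : ℝ → ℂ) (x : ℝ) : ℂ :=
  ∫ u in (-Real.pi)..Real.pi, f u * (g (x - u) : ℂ)

/-- The operators `I_{x,δ}^s f`: `I_{x,δ}^0 f = f(x)`, `I_{x,0}^s f = f(x)` (identity),
and `I_{x,δ}^s f = (f * B_{|δ|}^s)(x)` otherwise (so that `I_{x,-δ}^s = I_{x,δ}^s`). -/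
def Iop (x δ : ℝ) (s : ℕ) (f : ℝ → ℂ) : ℂ :=
  if s = 0 ∨ δ = 0 then f x else convC (B |δ| s) f x

/-- The smoothing operator `w_{x,h,2k}^s f = Σ_{i=0}^{2k} (-1)^{k-i} (C(2k,i)/C(2k,k)) I_{x,(i-k)h}^s f`. -/
def wop (x h : ℝ) (k s : ℕ) (f : ℝ → ℂ) : ℂ :=
  ∑ i ∈ Finset.range (2 * k + 1),
    ((-1 : ℂ) ^ ((k : ℤ) - (i : ℤ))) *
      ((Nat.choose (2 * k) i : ℂ) / (Nat.choose (2 * k) k : ℂ)) *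
        Iop x (((i : ℝ) - (k : ℝ)) * h) s f

/-- The `m`-th difference of a complex-valued `f` at `x` with step `h`:
`Δ_h^m f(x) = Σ_{i=0}^m (-1)^{m-i} C(m,i) f(x - (m/2)h + ih)`. -/
def deltaC (m : ℕ) (h : ℝ) (f : ℝ → ℂ) (x : ℝ) : ℂ :=
  ∑ i ∈ Finset.range (m + 1),
    ((-1 : ℂ) ^ (m - i)) * (Nat.choose m i : ℂ) * f (x - ((m : ℝ) / 2) * h + (i : ℝ) * h)

/-- The `m`-th difference of a real-valued `g` at `x` with step `h`. -/
def deltaR (m : ℕ) (h : ℝ) (g : ℝ → ℝ) (x : ℝ) : ℝ :=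
  ∑ i ∈ Finset.range (m + 1),
    ((-1 : ℝ) ^ (m - i)) * (Nat.choose m i : ℝ) * g (x - ((m : ℝ) / 2) * h + (i : ℝ) * h)

/-- Sup norm `‖f‖ = sup_{x ∈ T} |f(x)|`. -/
def supNorm (f : ℝ → ℂ) : ℝ := sSup {y : ℝ | ∃ x : ℝ, y = ‖f x‖}

/-- The `m`-th modulus of smoothness `ω_m(f,δ) = sup_{x, |h|<δ} |Δ_h^m f(x)|`. -/
def modulus (m : ℕ) (f : ℝ → ℂ) (δ : ℝ) : ℝ :=
  sSup {y : ℝ | ∃ x h : ℝ, |h| < δ ∧ y = ‖deltaC m h f x‖}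

/-- `τ` is a trigonometric polynomial of degree at most `n`. -/
def IsTrigPoly (n : ℕ) (τ : ℝ → ℂ) : Prop :=
  ∃ c : ℤ → ℂ, ∀ t : ℝ,
    τ t = ∑ j ∈ Finset.Icc (-(n : ℤ)) (n : ℤ), c j * Complex.exp ((j : ℂ) * t * Complex.I)

/-- The best uniform approximation `E_n(f) = inf_{τ ∈ T_n} ‖f - τ‖`. -/
def E (n : ℕ) (f : ℝ → ℂ) : ℝ :=
  sInf {y : ℝ | ∃ τ : ℝ → ℂ, IsTrigPoly n τ ∧ y = supNorm (fun x => f x - τ x)}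

/-- The `j`-th Fourier coefficient `ĉ_j(f) = (1/2π) ∫_T f(u) e^{-iju} du`. -/
def fc (f : ℝ → ℂ) (j : ℤ) : ℂ :=
  (1 / (2 * (Real.pi : ℂ))) * ∫ u in (-Real.pi)..Real.pi,
    f u * Complex.exp (-(j : ℂ) * (u : ℂ) * Complex.I)

/-- The `i`-th partial Fourier sum `s_i f(x) = Σ_{|j| ≤ i} ĉ_j(f) e^{ijx}`. -/
def PS (i : ℕ) (f : ℝ → ℂ) (x : ℝ) : ℂ :=
  ∑ j ∈ Finset.Icc (-(i : ℤ)) (i : ℤ), fc f j * Complex.exp ((j : ℂ) * (x : ℂ) * Complex.I)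

/-- The Fejér mean `σ_j f = (1/(j+1)) Σ_{i=0}^j s_i f`. -/
def Fej (j : ℕ) (f : ℝ → ℂ) (x : ℝ) : ℂ :=
  (1 / ((j : ℂ) + 1)) * ∑ i ∈ Finset.range (j + 1), PS i f x

/-- The de la Vallée Poussin mean `v_{k,m} f = (1/m) Σ_{i=km}^{(k+1)m-1} s_i f`. -/
def VP (k m : ℕ) (f : ℝ → ℂ) (x : ℝ) : ℂ :=
  (1 / (m : ℂ)) * ∑ i ∈ Finset.Ico (k * m) ((k + 1) * m), PS i f x

/-- `α = 2^{-5/2} 3^{1/2} π`. -/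
def alpha : ℝ := (2 : ℝ) ^ (-(5 / 2 : ℝ)) * Real.sqrt 3 * Real.pi

/-- The `L¹` norm on the circle of a complex function. -/
def L1C (g : ℝ → ℂ) : ℝ := ∫ u in (-Real.pi)..Real.pi, ‖g u‖

/-- The `L¹` norm on the circle of a real function. -/
def L1R (g : ℝ → ℝ) : ℝ := ∫ u in (-Real.pi)..Real.pi, |g u|
section Aux

open Set

lemma rep_periodic : Function.Periodic rep (2 * Real.pi) := by
  intro x
  unfold rep
  have h2 : (2 * Real.pi) ≠ 0 := by positivity
  have he : (x + 2 * Real.pi + Real.pi) / (2 * Real.pi)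
      = (x + Real.pi) / (2 * Real.pi) + 1 := by field_simp; ring
  rw [he, Int.floor_add_one]
  push_cast
  ring

lemma rep_eq_self {v : ℝ} (h1 : -Real.pi ≤ v) (h2 : v < Real.pi) : rep v = v := by
  have hπ : (0:ℝ) < 2 * Real.pi := by positivity
  have : ⌊(v + Real.pi) / (2 * Real.pi)⌋ = 0 := by
    rw [Int.floor_eq_zero_iff]
    constructor
    · rw [le_div_iff₀ hπ]; push_cast; linarith
    · rw [div_lt_iff₀ hπ]; push_cast; linarith
  simp [rep, this]

lemma rep_pi : rep Real.pi = -Real.pi := by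
  have hπ : (0:ℝ) < 2 * Real.pi := by positivity
  have : ⌊(Real.pi + Real.pi) / (2 * Real.pi)⌋ = 1 := by
    rw [show (Real.pi + Real.pi) / (2*Real.pi) = 1 by field_simp; ring]
    exact Int.floor_one
  rw [rep, this]
  push_cast; ring

lemma measurable_rep : Measurable rep := by
  unfold rep
  exact measurable_id.sub
    ((measurable_const.mul (measurable_from_top.comp
      ((measurable_id.add_const _).div_const _).floor)))

lemma B1_measurable (h : ℝ) : Measurable (B1 h) := by
  unfold B1
  exact Measurable.ite (measurableSet_le measurable_rep.abs measurable_const)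
    measurable_const measurable_const

lemma B1_periodic (h : ℝ) : Function.Periodic (B1 h) (2 * Real.pi) := by
  intro x; simp only [B1, rep_periodic x]

lemma B1_bound {h : ℝ} (hh : 0 < h) (x : ℝ) : |B1 h x| ≤ 1 / (2 * h) := by
  unfold B1
  split
  · rw [abs_of_nonneg (by positivity)]
  · rw [abs_zero]; positivity

lemma B_measurable (h : ℝ) : ∀ m, Measurable (B h m)
  | 0 => measurable_const
  | 1 => B1_measurable h
  | (m + 2) => by
      have hm := B_measurable h (m + 1)
      have hππ : -Real.pi ≤ Real.pi := by linarith [Real.pi_pos]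
      have hjoint : Measurable fun p : ℝ × ℝ => B1 h p.2 * B h (m + 1) (p.1 - p.2) :=
        ((B1_measurable h).comp measurable_snd).mul
          (hm.comp (measurable_fst.sub measurable_snd))
      have hfun : B h (m + 2)
          = fun x => ∫ u in Set.Ioc (-Real.pi) Real.pi, B1 h u * B h (m + 1) (x - u) := by
        funext x
        rw [show B h (m + 2) x = convR (B1 h) (B h (m + 1)) x from rfl, convR,
          intervalIntegral.integral_of_le hππ]
      rw [hfun]
      exact (hjoint.stronglyMeasurable.integral_prod_right').measurable

lemma B_periodic (h : ℝ) : ∀ m, Function.Periodic (B h m) (2 * Real.pi)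
  | 0 => fun _ => rfl
  | 1 => B1_periodic h
  | (m + 2) => by
      intro x
      show convR (B1 h) (B h (m + 1)) (x + 2 * Real.pi) = convR (B1 h) (B h (m + 1)) x
      unfold convR
      refine intervalIntegral.integral_congr fun u _ => ?_
      rw [show x + 2 * Real.pi - u = (x - u) + 2 * Real.pi by ring, B_periodic h (m + 1) (x - u)]

lemma B_bound {h : ℝ} (hh : 0 < h) : ∀ m, ∃ C, 0 ≤ C ∧ ∀ x, |B h m x| ≤ C
  | 0 => ⟨0, le_refl 0, fun x => by simp [B]⟩
  | 1 => ⟨1 / (2 * h), by positivity, fun x => B1_bound hh x⟩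
  | (m + 2) => by
      obtain ⟨C, hC0, hC⟩ := B_bound hh (m + 1)
      refine ⟨1 / (2 * h) * C * (2 * Real.pi), by positivity, fun x => ?_⟩
      have : B h (m + 2) x = convR (B1 h) (B h (m + 1)) x := rfl
      rw [this, convR, ← Real.norm_eq_abs]
      have hb : ∀ u ∈ Set.uIoc (-Real.pi) Real.pi,
          ‖B1 h u * B h (m + 1) (x - u)‖ ≤ 1 / (2 * h) * C := fun u _ => by
        rw [Real.norm_eq_abs, abs_mul]
        exact mul_le_mul (B1_bound hh u) (hC _) (abs_nonneg _) (by positivity)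
      calc ‖∫ u in (-Real.pi)..Real.pi, B1 h u * B h (m + 1) (x - u)‖
          ≤ 1 / (2 * h) * C * |Real.pi - (-Real.pi)| :=
            intervalIntegral.norm_integral_le_of_norm_le_const hb
        _ = 1 / (2 * h) * C * (2 * Real.pi) := by
            rw [abs_of_nonneg (by linarith [Real.pi_pos])]; ring_nf

lemma bounded_of_periodic {f : ℝ → ℂ} (hf : Continuous f)
    (hper : Function.Periodic f (2 * Real.pi)) :
    ∃ M, 0 ≤ M ∧ ∀ x, ‖f x‖ ≤ M := by
  have hne : (Set.Icc (0:ℝ) (2 * Real.pi)).Nonempty := ⟨0, le_refl 0, by positivity⟩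
  obtain ⟨z, _, hz2⟩ := isCompact_Icc.exists_isMaxOn hne hf.norm.continuousOn
  refine ⟨‖f z‖, norm_nonneg _, fun x => ?_⟩
  obtain ⟨y, hy, hxy⟩ := hper.exists_mem_Ico₀ (by positivity) x
  rw [hxy]
  exact hz2 (Set.Ico_subset_Icc_self hy)

end Aux
section Main

open Set Filter

lemma convC_flip {f : ℝ → ℂ} (hper : Function.Periodic f (2 * Real.pi)) {g : ℝ → ℝ}
    (hg : Function.Periodic g (2 * Real.pi)) (x : ℝ) :
    convC g f x = ∫ t in (-Real.pi)..Real.pi, f (x - t) * (g t : ℂ) := by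
  have h1 : convC g f x
      = ∫ u in (-Real.pi)..Real.pi, (fun t => f (x - t) * (g t : ℂ)) (x - u) := by
    unfold convC
    refine intervalIntegral.integral_congr fun u _ => ?_
    simp only
    rw [show x - (x - u) = u by ring]
  rw [h1, intervalIntegral.integral_comp_sub_left (fun t => f (x - t) * (g t : ℂ)) x,
    show x - -Real.pi = x + Real.pi by ring]
  have hφ : Function.Periodic (fun t => f (x - t) * (g t : ℂ)) (2 * Real.pi) := by
    intro t
    simp only
    rw [show x - (t + 2 * Real.pi) = (x - t - 2 * Real.pi) by ring, hg t]
    congr 1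
    have h2 := hper (x - t - 2 * Real.pi)
    rw [show x - t - 2 * Real.pi + 2 * Real.pi = x - t by ring] at h2
    rw [h2]
  have h3 := hφ.intervalIntegral_add_eq (x - Real.pi) (-Real.pi)
  rw [show x - Real.pi + 2 * Real.pi = x + Real.pi by ring,
    show -Real.pi + 2 * Real.pi = Real.pi by ring] at h3
  exact h3

lemma conv_continuous {f : ℝ → ℂ} (hf : Continuous f)
    (hper : Function.Periodic f (2 * Real.pi)) {g : ℝ → ℝ} (hg : Measurable g)
    (hgp : Function.Periodic g (2 * Real.pi)) {C : ℝ} (hC : ∀ x, |g x| ≤ C) :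
    Continuous (convC g f) := by
  obtain ⟨M, hM0, hM⟩ := bounded_of_periodic hf hper
  have key : Continuous fun x => ∫ t in Set.Ioc (-Real.pi) Real.pi, f (x - t) * (g t : ℂ) := by
    apply MeasureTheory.continuous_of_dominated (bound := fun _ => M * C)
    · intro x
      exact ((hf.measurable.comp (measurable_const.sub measurable_id)).mul
        (Complex.measurable_ofReal.comp hg)).aestronglyMeasurable
    · intro x
      refine Eventually.of_forall fun t => ?_
      rw [norm_mul, Complex.norm_real, Real.norm_eq_abs]
      exact mul_le_mul (hM _) (hC _) (abs_nonneg _) hM0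
    · exact MeasureTheory.integrable_const _
    · exact Eventually.of_forall fun t =>
        (hf.comp (continuous_id.sub continuous_const)).mul continuous_const
  refine key.congr fun x => ?_
  rw [convC_flip hper hgp x, intervalIntegral.integral_of_le (by linarith [Real.pi_pos])]

lemma conv_eq_integral {f : ℝ → ℂ} (hf : Continuous f)
    (hper : Function.Periodic f (2 * Real.pi)) {h : ℝ} (hh : 0 < h) (hhπ : h < Real.pi)
    (m : ℕ) (x : ℝ) :
    convC (B h (m + 2)) f x
      = (1 / (2 * h) : ℂ) * ∫ t in (x - h)..(x + h), convC (B h (m + 1)) f t := by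
  have hππ : -Real.pi ≤ Real.pi := by linarith [Real.pi_pos]
  obtain ⟨M, hM0, hM⟩ := bounded_of_periodic hf hper
  obtain ⟨C, hC0, hC⟩ := B_bound hh (m + 1)
  set μ := MeasureTheory.volume.restrict (Set.Ioc (-Real.pi) Real.pi) with hμdef
  set F := fun t => convC (B h (m + 1)) f t with hFdef
  have step1 : convC (B h (m + 2)) f x
      = ∫ u, ∫ v, f u * ((B1 h v * B h (m + 1) (x - u - v) : ℝ) : ℂ) ∂μ ∂μ := by
    rw [convC, intervalIntegral.integral_of_le hππ]
    refine MeasureTheory.setIntegral_congr_fun measurableSet_Ioc fun u _ => ?_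
    rw [show B h (m + 2) (x - u) = convR (B1 h) (B h (m + 1)) (x - u) from rfl, convR,
      intervalIntegral.integral_of_le hππ, hμdef, MeasureTheory.integral_const_mul]
    congr 1
    exact (integral_ofReal (𝕜 := ℂ)).symm
  have hInt : MeasureTheory.Integrable
      (Function.uncurry fun u v => f u * ((B1 h v * B h (m + 1) (x - u - v) : ℝ) : ℂ))
      (μ.prod μ) := by
    refine MeasureTheory.Integrable.mono' (g := fun _ => M * (1 / (2 * h) * C))
      (MeasureTheory.integrable_const _) ?_ ?_
    · exact ((hf.measurable.comp measurable_fst).mul (Complex.measurable_ofReal.comp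
        (((B1_measurable h).comp measurable_snd).mul ((B_measurable h (m + 1)).comp
          ((measurable_const.sub measurable_fst).sub measurable_snd))))).aestronglyMeasurable
    · refine Eventually.of_forall fun p => ?_
      rw [Function.uncurry, norm_mul, Complex.norm_real, Real.norm_eq_abs, abs_mul]
      exact mul_le_mul (hM _)
        (mul_le_mul (B1_bound hh _) (hC _) (abs_nonneg _) (by positivity))
        (mul_nonneg (abs_nonneg _) (abs_nonneg _)) hM0
  have step2 : (∫ u, ∫ v, f u * ((B1 h v * B h (m + 1) (x - u - v) : ℝ) : ℂ) ∂μ ∂μ)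
      = ∫ v, ∫ u, f u * ((B1 h v * B h (m + 1) (x - u - v) : ℝ) : ℂ) ∂μ ∂μ :=
    MeasureTheory.integral_integral_swap hInt
  have step3 : ∀ v, (∫ u, f u * ((B1 h v * B h (m + 1) (x - u - v) : ℝ) : ℂ) ∂μ)
      = (B1 h v : ℂ) * F (x - v) := by
    intro v
    rw [hFdef]
    simp only
    rw [convC, intervalIntegral.integral_of_le hππ, ← MeasureTheory.integral_const_mul]
    refine MeasureTheory.setIntegral_congr_fun measurableSet_Ioc fun u _ => ?_
    rw [show x - v - u = x - u - v by ring]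
    push_cast
    ring
  have step4 : (∫ v, (B1 h v : ℂ) * F (x - v) ∂μ)
      = ∫ v, Set.indicator (Set.Icc (-h) h) (fun w => (1 / (2 * h) : ℂ) * F (x - w)) v ∂μ := by
    refine MeasureTheory.setIntegral_congr_fun measurableSet_Ioc fun v hv => ?_
    by_cases hvh : |v| ≤ h
    · have hrep : rep v = v :=
        rep_eq_self (le_of_lt hv.1) (lt_of_le_of_lt (le_of_abs_le hvh) hhπ)
      rw [B1, hrep, if_pos hvh, Set.indicator_of_mem (Set.mem_Icc.mpr (abs_le.mp hvh))]
      push_cast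
      ring
    · have hb1 : B1 h v = 0 := by
        rcases eq_or_lt_of_le hv.2 with hvp | hvp
        · rw [B1, hvp, rep_pi, if_neg]
          rw [abs_neg, abs_of_nonneg (le_of_lt Real.pi_pos)]
          exact not_le.mpr hhπ
        · rw [B1, rep_eq_self (le_of_lt hv.1) hvp, if_neg hvh]
      rw [hb1, Set.indicator_of_notMem (fun hmem => hvh (abs_le.mpr (Set.mem_Icc.mp hmem)))]
      norm_num
  have hsub : Set.Icc (-h) h ⊆ Set.Ioc (-Real.pi) Real.pi := fun v hv =>
    ⟨lt_of_lt_of_le (by linarith) hv.1, le_trans hv.2 (le_of_lt hhπ)⟩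
  have step5 : (∫ v, Set.indicator (Set.Icc (-h) h)
        (fun w => (1 / (2 * h) : ℂ) * F (x - w)) v ∂μ)
      = ∫ v in (-h)..h, (1 / (2 * h) : ℂ) * F (x - v) := by
    rw [hμdef, MeasureTheory.integral_indicator measurableSet_Icc,
      MeasureTheory.Measure.restrict_restrict measurableSet_Icc,
      Set.inter_eq_left.mpr hsub, MeasureTheory.integral_Icc_eq_integral_Ioc,
      intervalIntegral.integral_of_le (by linarith)]
  rw [step1, step2]
  calc (∫ v, ∫ u, f u * ((B1 h v * B h (m + 1) (x - u - v) : ℝ) : ℂ) ∂μ ∂μ)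
      = ∫ v, (B1 h v : ℂ) * F (x - v) ∂μ := by
        refine MeasureTheory.integral_congr_ae (Eventually.of_forall fun v => step3 v)
    _ = ∫ v in (-h)..h, (1 / (2 * h) : ℂ) * F (x - v) := by rw [step4, step5]
    _ = (1 / (2 * h) : ℂ) * ∫ v in (-h)..h, F (x - v) := intervalIntegral.integral_const_mul _ _
    _ = (1 / (2 * h) : ℂ) * ∫ t in (x - h)..(x + h), F t := by
        rw [intervalIntegral.integral_comp_sub_left F x, show x - -h = x + h by ring]

end Main
/-- Differentiation of the smoothed function: for continuous `2π`-periodic `f`,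
`0 < h < π`, `s ≥ 2`, `sh < π`, the function `x ↦ (f * B_h^s)(x)` is differentiable
with derivative `(2h)⁻¹ [(f * B_h^{s-1})(x+h) - (f * B_h^{s-1})(x-h)]`. -/
theorem stmt5 (f : ℝ → ℂ) (hf : Continuous f) (hper : Function.Periodic f (2 * Real.pi))
    (h : ℝ) (hh : 0 < h) (hhπ : h < Real.pi) (s : ℕ) (hs : 2 ≤ s)
    (hsh : (s : ℝ) * h < Real.pi) (x : ℝ) :
    HasDerivAt (fun y => convC (B h s) f y)
      (((2 * h)⁻¹ : ℝ) * (convC (B h (s - 1)) f (x + h) - convC (B h (s - 1)) f (x - h)))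
      x := by
  obtain ⟨k, rfl⟩ : ∃ k, s = k + 2 := ⟨s - 2, by omega⟩
  have hk1 : k + 2 - 1 = k + 1 := rfl
  set F := fun t => convC (B h (k + 1)) f t with hFdef
  obtain ⟨C, hC0, hC⟩ := B_bound hh (k + 1)
  have hFc : Continuous F :=
    conv_continuous hf hper (B_measurable h (k + 1)) (B_periodic h (k + 1)) hC
  have hG : ∀ y, convC (B h (k + 2)) f y
      = (1 / (2 * h) : ℂ) * ((∫ t in (0:ℝ)..(y + h), F t) - ∫ t in (0:ℝ)..(y - h), F t) := by
    intro y
    rw [conv_eq_integral hf hper hh hhπ k y]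
    congr 1
    rw [← intervalIntegral.integral_add_adjacent_intervals (a := y - h) (b := 0) (c := y + h)
      (hFc.intervalIntegrable _ _) (hFc.intervalIntegrable _ _),
      intervalIntegral.integral_symm 0 (y - h)]
    ring
  have h1 : HasDerivAt (fun y => ∫ t in (0:ℝ)..(y + h), F t) (F (x + h)) x := by
    have hH : HasDerivAt (fun z => ∫ t in (0:ℝ)..z, F t) (F (x + h)) (x + h) :=
      intervalIntegral.integral_hasDerivAt_right (hFc.intervalIntegrable _ _)
        hFc.stronglyMeasurable.stronglyMeasurableAtFilter hFc.continuousAt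
    exact hH.comp_add_const x h
  have h2 : HasDerivAt (fun y => ∫ t in (0:ℝ)..(y - h), F t) (F (x - h)) x := by
    have hH : HasDerivAt (fun z => ∫ t in (0:ℝ)..z, F t) (F (x - h)) (x - h) :=
      intervalIntegral.integral_hasDerivAt_right (hFc.intervalIntegrable _ _)
        hFc.stronglyMeasurable.stronglyMeasurableAtFilter hFc.continuousAt
    exact hH.comp_sub_const x h
  have hd : HasDerivAt
      (fun y => (1 / (2 * h) : ℂ) * ((∫ t in (0:ℝ)..(y + h), F t) - ∫ t in (0:ℝ)..(y - h), F t))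
      ((1 / (2 * h) : ℂ) * (F (x + h) - F (x - h))) x := (h1.sub h2).const_mul _
  have hcoef : ((((2 * h)⁻¹ : ℝ)) : ℂ) * (convC (B h (k + 2 - 1)) f (x + h)
      - convC (B h (k + 2 - 1)) f (x - h)) = (1 / (2 * h) : ℂ) * (F (x + h) - F (x - h)) := by
    rw [hk1, hFdef]
    push_cast
    ring
  rw [hcoef]
  exact hd.congr_of_eventuallyEq (Filter.Eventually.of_forall fun y => hG y)
end
end

section
/- Let m ≥ 1 and s ≥ m + 2, and let h satisfy 0 < sh < π. Then the kernel B_h^s is m times differentiable and D^m B_h^s(x) = (2h)^{−m} Δ_{2h}^m B_h^{s−m}(x) for all x, where Δ_{2h}^m g(x) = Σ_{i=0}^m (−1)^{m−i} binom(m,i) g(x − mh + 2ih) is the m-th symmetric difference with step 2h. -/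
open scoped Real BigOperators
open MeasureTheory

noncomputable section

namespace Stmt6Aux

lemma rep_eq {u : ℝ} (h1 : -Real.pi ≤ u) (h2 : u < Real.pi) : rep u = u := by
  have hπ := Real.pi_pos
  have : ⌊(u + Real.pi) / (2 * Real.pi)⌋ = 0 := by
    rw [Int.floor_eq_zero_iff]
    constructor
    · exact div_nonneg (by linarith) (by positivity)
    · rw [div_lt_one (by positivity)]; linarith
  simp [rep, this]

lemma rep_pi : rep Real.pi = -Real.pi := by
  have hπ := Real.pi_pos
  have : ⌊(Real.pi + Real.pi) / (2 * Real.pi)⌋ = 1 := by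
    rw [show (Real.pi + Real.pi) / (2*Real.pi) = 1 by field_simp; ring]
    exact Int.floor_one
  rw [rep, this]; push_cast; ring

lemma convR_B1_eq {h : ℝ} (h0 : 0 < h) (hπ : h < Real.pi) (g : ℝ → ℝ) (x : ℝ) :
    convR (B1 h) g x = (1 / (2 * h)) * ∫ t in (x - h)..(x + h), g t := by
  have hpi := Real.pi_pos
  have step1 : convR (B1 h) g x
      = ∫ u in (-Real.pi)..Real.pi, (Set.Icc (-h) h).indicator (fun u => 1 / (2*h) * g (x - u)) u := by
    apply intervalIntegral.integral_congr
    intro u hu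
    rw [Set.uIcc_of_le (by linarith)] at hu
    by_cases hmem : u ∈ Set.Icc (-h) h
    · rw [Set.indicator_of_mem hmem]
      have hrep : rep u = u := rep_eq (by linarith [hmem.1]) (by linarith [hmem.2])
      simp only [B1, hrep]
      rw [if_pos (abs_le.mpr ⟨hmem.1, hmem.2⟩)]
    · rw [Set.indicator_of_notMem hmem]
      have : ¬ |rep u| ≤ h := by
        rcases eq_or_lt_of_le hu.2 with he | hlt
        · rw [he, rep_pi, abs_neg, abs_of_pos hpi]; push_neg; linarith
        · rw [rep_eq hu.1 hlt]
          intro hcon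
          exact hmem (abs_le.mp hcon)
      simp [B1, this]
  rw [step1]
  have hsub : Set.Icc (-h) h ⊆ Set.Ioc (-Real.pi) Real.pi := fun t ht =>
    ⟨by linarith [ht.1], by linarith [ht.2]⟩
  rw [intervalIntegral.integral_of_le (by linarith), setIntegral_indicator measurableSet_Icc,
    Set.inter_eq_self_of_subset_right hsub, integral_Icc_eq_integral_Ioc,
    ← intervalIntegral.integral_of_le (by linarith : -h ≤ h),
    intervalIntegral.integral_const_mul, intervalIntegral.integral_comp_sub_left (fun t => g t) x]
  norm_num

lemma intInt {g : ℝ → ℝ} (hg : Measurable g) (C : ℝ) (hb : ∀ y, |g y| ≤ C) (a b : ℝ) :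
    IntervalIntegrable g volume a b := by
  rw [intervalIntegrable_iff]
  exact Measure.integrableOn_of_bounded (by simp [measure_lt_top])
    hg.aestronglyMeasurable (Filter.Eventually.of_forall (fun y => by simpa using hb y))

lemma cont_slide {g : ℝ → ℝ} {h : ℝ} (hg : Measurable g) (C : ℝ) (hb : ∀ y, |g y| ≤ C) :
    Continuous (fun x => ∫ t in (x - h)..(x + h), g t) := by
  have hi : ∀ a b, IntervalIntegrable g volume a b := intInt hg C hb
  have e : ∀ x : ℝ, (∫ t in (x-h)..(x+h), g t) = (∫ t in (0:ℝ)..(x+h), g t) - ∫ t in (0:ℝ)..(x-h), g t := by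
    intro x
    rw [← intervalIntegral.integral_add_adjacent_intervals (hi 0 (x-h)) (hi (x-h) (x+h))]
    ring
  simp only [e]
  exact ((intervalIntegral.continuous_primitive hi 0).comp (by continuity)).sub
    ((intervalIntegral.continuous_primitive hi 0).comp (by continuity))

lemma hasDeriv_slide {g : ℝ → ℝ} {h : ℝ} (hg : Continuous g) (x : ℝ) :
    HasDerivAt (fun x => ∫ t in (x - h)..(x + h), g t) (g (x + h) - g (x - h)) x := by
  have hi : ∀ a b, IntervalIntegrable g volume a b := fun a b => hg.intervalIntegrable a b
  have e : ∀ x : ℝ, (∫ t in (x-h)..(x+h), g t) = (∫ t in (0:ℝ)..(x+h), g t) - ∫ t in (0:ℝ)..(x-h), g t := by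
    intro x
    rw [← intervalIntegral.integral_add_adjacent_intervals (hi 0 (x-h)) (hi (x-h) (x+h))]
    ring
  have hG : ∀ y : ℝ, HasDerivAt (fun y => ∫ t in (0:ℝ)..y, g t) (g y) y := fun y =>
    intervalIntegral.integral_hasDerivAt_right (hi 0 y)
      hg.aestronglyMeasurable.stronglyMeasurableAtFilter hg.continuousAt
  have h1 : HasDerivAt (fun x : ℝ => ∫ t in (0:ℝ)..(x+h), g t) (g (x+h)) x := by
    simpa using HasDerivAt.comp_add_const x h (hG (x+h))
  have h2 : HasDerivAt (fun x : ℝ => ∫ t in (0:ℝ)..(x-h), g t) (g (x-h)) x := by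
    simpa [sub_eq_add_neg] using HasDerivAt.comp_add_const x (-h) (hG (x-h))
  have := h1.sub h2
  exact this.congr_of_eventuallyEq (Filter.Eventually.of_forall fun y => e y)

lemma B_eq_slide {h : ℝ} (h0 : 0 < h) (hπ : h < Real.pi) (k : ℕ) (x : ℝ) :
    B h (k + 2) x = (1 / (2 * h)) * ∫ t in (x - h)..(x + h), B h (k + 1) t :=
  convR_B1_eq h0 hπ _ x

lemma measurable_rep : Measurable rep := by
  unfold rep
  have hf : Measurable fun x : ℝ => ((⌊(x + Real.pi) / (2 * Real.pi)⌋ : ℤ) : ℝ) :=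
    (measurable_from_top (f := (Int.cast : ℤ → ℝ))).comp
      (((measurable_id.add_const Real.pi).div_const (2*Real.pi)).floor)
  exact measurable_id.sub (hf.const_mul _)

lemma B_meas_bdd {h : ℝ} (h0 : 0 < h) (hπ : h < Real.pi) :
    ∀ k, Measurable (B h k) ∧ ∀ x, |B h k x| ≤ 1 / (2 * h) := by
  have hpos : (0:ℝ) < 1 / (2*h) := by positivity
  intro k
  induction k using Nat.strong_induction_on with
  | _ k ih =>
    match k with
    | 0 => exact ⟨measurable_const, fun x => by simp [B]; positivity⟩
    | 1 =>
      refine ⟨Measurable.ite ?_ measurable_const measurable_const, fun x => ?_⟩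
      · exact measurableSet_le (measurable_rep.abs) measurable_const
      · show |B1 h x| ≤ _
        unfold B1; split
        · rw [abs_of_pos hpos]
        · simpa using le_of_lt hpos
    | (k + 2) =>
      obtain ⟨hm, hb⟩ := ih (k+1) (by omega)
      have hcont : Continuous (B h (k+2)) := by
        have heq : B h (k+2) = fun x => (1/(2*h)) * ∫ t in (x-h)..(x+h), B h (k+1) t :=
          funext (B_eq_slide h0 hπ k)
        rw [heq]
        exact continuous_const.mul (cont_slide hm (1/(2*h)) hb)
      refine ⟨hcont.measurable, fun x => ?_⟩
      rw [B_eq_slide h0 hπ k x, abs_mul, abs_of_pos hpos]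
      have := intervalIntegral.norm_integral_le_of_norm_le_const
        (C := 1/(2*h)) (f := B h (k+1)) (a := x - h) (b := x + h) (fun y _ => hb y)
      rw [Real.norm_eq_abs] at this
      have h2 : |x + h - (x - h)| = 2 * h := by rw [abs_of_pos (by linarith)]; ring
      rw [h2] at this
      calc 1/(2*h) * |∫ t in (x-h)..(x+h), B h (k+1) t| ≤ 1/(2*h) * (1/(2*h) * (2*h)) :=
            by apply mul_le_mul_of_nonneg_left this (le_of_lt hpos)
        _ = 1/(2*h) := by field_simp

lemma B_cont {h : ℝ} (h0 : 0 < h) (hπ : h < Real.pi) (k : ℕ) : Continuous (B h (k + 2)) := by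
  obtain ⟨hm, hb⟩ := B_meas_bdd h0 hπ (k+1)
  have heq : B h (k+2) = fun x => (1/(2*h)) * ∫ t in (x-h)..(x+h), B h (k+1) t :=
    funext (B_eq_slide h0 hπ k)
  rw [heq]
  exact continuous_const.mul (cont_slide hm (1/(2*h)) hb)

lemma B_hasDeriv {h : ℝ} (h0 : 0 < h) (hπ : h < Real.pi) (k : ℕ) (x : ℝ) :
    HasDerivAt (B h (k + 3)) ((1 / (2*h)) * (B h (k + 2) (x + h) - B h (k + 2) (x - h))) x := by
  have hcont := B_cont h0 hπ k
  have := (hasDeriv_slide (h := h) hcont x).const_mul (1/(2*h))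
  apply this.congr_of_eventuallyEq
  filter_upwards with y
  exact (B_eq_slide h0 hπ (k+1) y)

lemma B_contDiff {h : ℝ} (h0 : 0 < h) (hπ : h < Real.pi) :
    ∀ (n : ℕ) (k : ℕ), ContDiff ℝ (n : ℕ∞) (B h (n + k + 2)) := by
  intro n
  induction n with
  | zero => intro k; simpa [contDiff_zero] using B_cont h0 hπ k
  | succ n ih =>
    intro k
    have hd : ∀ x, HasDerivAt (B h (n + k + 3))
        ((1/(2*h)) * (B h (n + k + 2) (x + h) - B h (n + k + 2) (x - h))) x :=
      B_hasDeriv h0 hπ (n + k)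
    have hderiv : deriv (B h (n + k + 3))
        = fun x => (1/(2*h)) * (B h (n+k+2) (x+h) - B h (n+k+2) (x-h)) :=
      funext fun x => (hd x).deriv
    have hstep : ContDiff ℝ ((n : WithTop ℕ∞) + 1) (B h (n + k + 3)) := by
      rw [contDiff_succ_iff_deriv]
      refine ⟨fun x => (hd x).differentiableAt, by simp, ?_⟩
      rw [hderiv]
      have h1 : ContDiff ℝ (n : ℕ∞) (B h (n+k+2)) := ih k
      have h2 : ContDiff ℝ (n : WithTop ℕ∞) (B h (n+k+2)) := h1.of_le (by exact_mod_cast le_refl _)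
      exact contDiff_const.mul ((h2.comp (contDiff_id.add contDiff_const)).sub
        (h2.comp (contDiff_id.sub contDiff_const)))
    have : ContDiff ℝ (((n+1 : ℕ) : ℕ∞)) (B h (n + k + 3)) :=
      hstep.of_le (by exact_mod_cast le_refl _)
    convert this using 2
    omega

lemma neg_one_pow_sub {n i : ℕ} (h : i ≤ n) : ((-1:ℝ))^(n-i) = (-1)^n * (-1)^i := by
  have h2 : ((-1:ℝ)^i)*((-1)^i) = 1 := by rw [← pow_add, ← two_mul, pow_mul]; norm_num
  calc (-1:ℝ)^(n-i) = (-1)^(n-i) * ((-1)^i * (-1)^i) := by rw [h2, mul_one]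
    _ = (-1)^(n-i+i) * (-1)^i := by rw [pow_add]; ring
    _ = (-1)^n * (-1)^i := by rw [Nat.sub_add_cancel h]

lemma fact_sum (n : ℕ) (F : ℕ → ℝ) :
    ∑ i ∈ Finset.range (n+1), (-1:ℝ)^(n-i) * (n.choose i : ℝ) * F i
      = (-1)^n * ∑ i ∈ Finset.range (n+1), (-1:ℝ)^i * (n.choose i : ℝ) * F i := by
  rw [Finset.mul_sum]
  apply Finset.sum_congr rfl
  intro i hi
  rw [neg_one_pow_sub (Nat.lt_succ_iff.mp (Finset.mem_range.mp hi))]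
  ring

lemma key (m : ℕ) (G : ℕ → ℝ) :
    (∑ i ∈ Finset.range (m+2), (-1:ℝ)^i * ((m+1).choose i : ℝ) * G i)
    = (∑ i ∈ Finset.range (m+1), (-1:ℝ)^i * (m.choose i : ℝ) * G i)
      - ∑ i ∈ Finset.range (m+1), (-1:ℝ)^i * (m.choose i : ℝ) * G (i+1) := by
  rw [Finset.sum_range_succ' (fun i => (-1:ℝ)^i * ((m+1).choose i : ℝ) * G i) (m+1)]
  rw [Finset.sum_range_succ' (fun i => (-1:ℝ)^i * (m.choose i : ℝ) * G i) m]
  have e1 : ∀ i ∈ Finset.range (m+1), (-1:ℝ)^(i+1) * ((m+1).choose (i+1) : ℝ) * G (i+1)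
      = -((-1:ℝ)^i * (m.choose i : ℝ) * G (i+1))
        + (-1:ℝ)^(i+1) * (m.choose (i+1) : ℝ) * G (i+1) := by
    intro i _
    rw [Nat.choose_succ_succ]
    push_cast
    ring
  rw [Finset.sum_congr rfl e1, Finset.sum_add_distrib]
  have e2 : ∑ i ∈ Finset.range (m+1), (-1:ℝ)^(i+1) * (m.choose (i+1):ℝ) * G (i+1)
      = ∑ i ∈ Finset.range m, (-1:ℝ)^(i+1) * (m.choose (i+1):ℝ) * G (i+1) := by
    rw [Finset.sum_range_succ, Nat.choose_succ_self]
    simp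
  rw [e2, Finset.sum_neg_distrib]
  simp only [Nat.choose_zero_right, Nat.cast_one, pow_zero]
  ring

lemma deltaR_rec (m : ℕ) (d : ℝ) (g : ℝ → ℝ) (x : ℝ) :
    deltaR (m+1) d g x
      = deltaR m d (fun y => g (y + d/2)) x - deltaR m d (fun y => g (y - d/2)) x := by
  set G : ℕ → ℝ := fun j => g (x - (((m:ℝ)+1) / 2) * d + (j:ℝ) * d) with hG
  have L : deltaR (m+1) d g x
      = ∑ i ∈ Finset.range (m+2), (-1:ℝ)^((m+1)-i) * ((m+1).choose i : ℝ) * G i := by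
    apply Finset.sum_congr rfl
    intro i _
    congr 1
    show g _ = g _
    congr 1
    push_cast; ring
  have R1 : deltaR m d (fun y => g (y + d/2)) x
      = ∑ i ∈ Finset.range (m+1), (-1:ℝ)^(m-i) * (m.choose i : ℝ) * G (i+1) := by
    apply Finset.sum_congr rfl
    intro i _
    congr 1
    show g _ = g _
    congr 1
    push_cast; ring
  have R2 : deltaR m d (fun y => g (y - d/2)) x
      = ∑ i ∈ Finset.range (m+1), (-1:ℝ)^(m-i) * (m.choose i : ℝ) * G i := by
    apply Finset.sum_congr rfl
    intro i _
    congr 1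
    show g _ = g _
    congr 1
    push_cast; ring
  rw [L, R1, R2, fact_sum (m+1) G, fact_sum m (fun i => G (i+1)), fact_sum m G, key m G]
  ring

lemma main_formula {h : ℝ} (h0 : 0 < h) (hπ : h < Real.pi) :
    ∀ m, 1 ≤ m → ∀ s, m + 2 ≤ s → ∀ x, iteratedDeriv m (B h s) x
      = (2 * h) ^ (-(m:ℤ)) * deltaR m (2*h) (B h (s - m)) x := by
  have hne : (2*h) ≠ 0 := by positivity
  intro m hm
  induction m, hm using Nat.le_induction with
  | base =>
    intro s hs x
    obtain ⟨k, rfl⟩ : ∃ k, s = k + 3 := ⟨s - 3, by omega⟩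
    rw [iteratedDeriv_one, (B_hasDeriv h0 hπ k x).deriv]
    have hs1 : k + 3 - 1 = k + 2 := by omega
    rw [hs1]
    have hΔ : deltaR 1 (2*h) (B h (k+2)) x
        = -(B h (k+2) (x - h)) + B h (k+2) (x + h) := by
      unfold deltaR
      rw [Finset.sum_range_succ, Finset.sum_range_succ, Finset.sum_range_zero]
      norm_num
      rw [show x - 1/2*(2*h) = x - h by ring]
      rw [show x - h + 2*h = x + h by ring]
    rw [hΔ]
    rw [show ((2*h):ℝ) ^ (-(1:ℕ) : ℤ) = 1/(2*h) by
      norm_num]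
    ring
  | succ m hm1 ih =>
    intro s hs x
    have hsm : s - m = (s - m - 3) + 3 := by omega
    set p := s - m - 3 with hpdef
    rw [iteratedDeriv_succ]
    have hfun : iteratedDeriv m (B h s) = fun y => (2*h)^(-(m:ℤ)) * deltaR m (2*h) (B h (s-m)) y :=
      funext (ih s (by omega))
    rw [hfun]
    have hgderiv : ∀ y : ℝ, HasDerivAt (B h (s - m))
        ((1/(2*h)) * (B h (p+2) (y+h) - B h (p+2) (y-h))) y := by
      rw [hsm]; exact B_hasDeriv h0 hπ p
    have hterm : ∀ (i : ℕ) (y : ℝ), HasDerivAt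
        (fun y => (-1:ℝ)^(m-i) * ((m.choose i : ℝ)) * B h (s-m) (y - ((m:ℝ)/2)*(2*h) + (i:ℝ)*(2*h)))
        ((-1:ℝ)^(m-i) * ((m.choose i : ℝ)) *
          ((1/(2*h)) * (B h (p+2) ((y - ((m:ℝ)/2)*(2*h) + (i:ℝ)*(2*h)) + h)
            - B h (p+2) ((y - ((m:ℝ)/2)*(2*h) + (i:ℝ)*(2*h)) - h)))) y := by
      intro i y
      have hin : HasDerivAt (fun y : ℝ => y - ((m:ℝ)/2)*(2*h) + (i:ℝ)*(2*h)) 1 y := by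
        simpa using ((hasDerivAt_id y).sub_const (((m:ℝ)/2)*(2*h))).add_const ((i:ℝ)*(2*h))
      have hcomp := (hgderiv (y - ((m:ℝ)/2)*(2*h) + (i:ℝ)*(2*h))).comp y hin
      simp only [Function.comp_def, mul_one] at hcomp
      exact hcomp.const_mul _
    have hsum : HasDerivAt (fun y => deltaR m (2*h) (B h (s-m)) y)
        (∑ i ∈ Finset.range (m+1), (-1:ℝ)^(m-i) * ((m.choose i : ℝ)) *
          ((1/(2*h)) * (B h (p+2) ((x - ((m:ℝ)/2)*(2*h) + (i:ℝ)*(2*h)) + h)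
            - B h (p+2) ((x - ((m:ℝ)/2)*(2*h) + (i:ℝ)*(2*h)) - h)))) x :=
      HasDerivAt.fun_sum (fun i _ => hterm i x)
    have hD := (hsum.const_mul ((2*h)^(-(m:ℤ)))).deriv
    rw [hD]
    have hs2 : s - (m+1) = p + 2 := by omega
    rw [hs2]
    have hrec := deltaR_rec m (2*h) (B h (p+2)) x
    rw [show (2*h)/2 = h by ring] at hrec
    have hplus : deltaR m (2*h) (fun y => B h (p+2) (y + h)) x
        = ∑ i ∈ Finset.range (m+1), (-1:ℝ)^(m-i) * ((m.choose i : ℝ)) *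
          (B h (p+2) ((x - ((m:ℝ)/2)*(2*h) + (i:ℝ)*(2*h)) + h)) := rfl
    have hminus : deltaR m (2*h) (fun y => B h (p+2) (y - h)) x
        = ∑ i ∈ Finset.range (m+1), (-1:ℝ)^(m-i) * ((m.choose i : ℝ)) *
          (B h (p+2) ((x - ((m:ℝ)/2)*(2*h) + (i:ℝ)*(2*h)) - h)) := rfl
    have hzpow : ((2*h):ℝ) ^ (-((m+1:ℕ):ℤ)) = (2*h)^(-(m:ℤ)) * (1/(2*h)) := by
      rw [show (-((m+1:ℕ):ℤ)) = (-(m:ℤ)) + (-1) by push_cast; ring, zpow_add₀ hne]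
      norm_num
    rw [hzpow, hrec, hplus, hminus, ← Finset.sum_sub_distrib, Finset.mul_sum, Finset.mul_sum]
    apply Finset.sum_congr rfl
    intro i _
    ring

end Stmt6Aux

/-- For `m ≥ 1`, `s ≥ m + 2`, `0 < sh < π`, the kernel `B_h^s` is `m` times
differentiable and `D^m B_h^s(x) = (2h)^{-m} Δ_{2h}^m B_h^{s-m}(x)`. -/
theorem stmt6 (m s : ℕ) (hm : 1 ≤ m) (hs : m + 2 ≤ s) (h : ℝ)
    (hpos : 0 < (s : ℝ) * h) (hlt : (s : ℝ) * h < Real.pi) :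
    ContDiff ℝ (m : ℕ∞) (B h s) ∧
    ∀ x : ℝ, iteratedDeriv m (B h s) x =
      (2 * h) ^ (-(m : ℤ)) * deltaR m (2 * h) (B h (s - m)) x := by
  have hsR : (1:ℝ) ≤ (s:ℝ) := by exact_mod_cast (by omega : 1 ≤ s)
  have hh0 : 0 < h := by nlinarith
  have hhπ : h < Real.pi := by nlinarith
  constructor
  · have := Stmt6Aux.B_contDiff hh0 hhπ m (s - m - 2)
    convert this using 2
    omega
  · exact Stmt6Aux.main_formula hh0 hhπ m hm s hs
end
end

section
/- Let f be a continuous 2π-periodic function, k ≥ 1, s ≥ 1, and 0 < skh < π. Then the smoothing operator w_{x,h,2k}^s has the integral representation w_{x,h,2k}^s f = (−1)^k · C(2k,k)^{−1} · ∫_T Δ_u^{2k} f(x) · B_h^s(u) du, where Δ_u^{2k}f(x) is the 2k-th difference of f at x with step u. -/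
open scoped Real BigOperators
open MeasureTheory

noncomputable section

namespace Stmt7Aux

open intervalIntegral Set

lemma two_pi_pos : 0 < 2 * π := by positivity

lemma rep_def' (x : ℝ) : rep x = 2 * π * Int.fract ((x + π) / (2 * π)) - π := by
  unfold rep Int.fract
  have h : (2:ℝ) * π ≠ 0 := two_pi_pos.ne'
  field_simp
  ring

lemma rep_eq {x : ℝ} (h1 : -π ≤ x) (h2 : x < π) : rep x = x := by
  unfold rep
  have h0 : ⌊(x + π) / (2 * π)⌋ = 0 := by
    rw [Int.floor_eq_zero_iff]
    constructor
    · apply div_nonneg (by linarith) two_pi_pos.le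
    · rw [div_lt_one two_pi_pos]; linarith
  rw [h0]; push_cast; ring

lemma rep_mem (x : ℝ) : rep x ∈ Set.Ico (-π) π := by
  rw [rep_def']
  have h1 := Int.fract_nonneg ((x + π) / (2 * π))
  have h2 := Int.fract_lt_one ((x + π) / (2 * π))
  constructor
  · nlinarith [Real.pi_pos]
  · nlinarith [Real.pi_pos]

lemma rep_add_int (x : ℝ) (n : ℤ) : rep (x + 2 * π * n) = rep x := by
  unfold rep
  have h : (2:ℝ) * π ≠ 0 := two_pi_pos.ne'
  have : (x + 2 * π * n + π) / (2 * π) = (x + π) / (2 * π) + n := by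
    field_simp; ring
  rw [this, Int.floor_add_intCast]
  push_cast; ring

lemma rep_per (x : ℝ) : rep (x + 2 * π) = rep x := by
  simpa using rep_add_int x 1

lemma rep_pi : rep π = -π := by
  have h2 := rep_per (-π)
  rw [show -π + 2 * π = π by ring] at h2
  rw [h2, rep_eq (le_refl _) (by linarith [Real.pi_pos])]

lemma rep_abs {x : ℝ} (hx : |x| ≤ π) : |rep x| = |x| := by
  rcases eq_or_lt_of_le (abs_le.1 hx).2 with h | h
  · subst h
    rw [rep_pi, abs_neg]
  · rw [rep_eq (abs_le.1 hx).1 h]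

lemma rep_spec (x : ℝ) : ∃ n : ℤ, x = rep x + 2 * π * n := by
  refine ⟨⌊(x + π) / (2 * π)⌋, ?_⟩
  unfold rep; ring

lemma rep_abs_neg (x : ℝ) : |rep (-x)| = |rep x| := by
  obtain ⟨n, hn⟩ := rep_spec x
  have h1 : rep (-x) = rep (-rep x) := by
    conv_lhs => rw [hn]
    have : -(rep x + 2 * π * n) = -rep x + 2 * π * (-n : ℤ) := by push_cast; ring
    rw [this, rep_add_int]
  rcases eq_or_lt_of_le (rep_mem x).1 with h | h
  · rw [h1, ← h, neg_neg, rep_pi]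
  · have h2 : rep (-rep x) = -rep x := by
      apply rep_eq
      · linarith [(rep_mem x).2]
      · linarith
    rw [h1, h2, abs_neg]

end Stmt7Aux
namespace Stmt7Aux

open intervalIntegral Set

lemma rep_meas : Measurable rep := by
  unfold rep
  have hfl : Measurable (fun x : ℝ => ((⌊(x + π) / (2 * π)⌋ : ℤ) : ℝ)) :=
    measurable_from_top.comp ((measurable_id.add_const π).div_const _).floor
  exact measurable_id.sub (measurable_const.mul hfl)

lemma B1_meas (h : ℝ) : Measurable (B1 h) := by
  unfold B1
  exact Measurable.ite (measurableSet_le (rep_meas.abs) measurable_const)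
    measurable_const measurable_const

lemma B1_bd (h : ℝ) (x : ℝ) : |B1 h x| ≤ |1 / (2 * h)| := by
  unfold B1
  split
  · exact le_refl _
  · rw [abs_zero]; exact abs_nonneg _

lemma B1_per (h : ℝ) : Function.Periodic (B1 h) (2 * π) := by
  intro x; unfold B1; rw [rep_per]

lemma B1_even (h x : ℝ) : B1 h (-x) = B1 h x := by
  unfold B1; rw [rep_abs_neg]

lemma B1_zero {h x : ℝ} (h1 : h < |x|) (h2 : |x| ≤ π) : B1 h x = 0 := by
  unfold B1
  rw [if_neg]
  rw [rep_abs h2]; linarith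

lemma B1_ne0 {h x : ℝ} (hne : B1 h x ≠ 0) : |rep x| ≤ h := by
  unfold B1 at hne
  by_contra hc
  rw [if_neg hc] at hne
  exact hne rfl

lemma B1_scale {c h : ℝ} (hc : 1 ≤ c) (hh : 0 < h) (hch : c * h < π) :
    ∀ x, |x| ≤ π → B1 (c * h) x = c⁻¹ * B1 h (x / c) := by
  intro x hx
  have hc0 : (0:ℝ) < c := lt_of_lt_of_le one_pos hc
  have hxc : |x / c| ≤ π := by
    rw [abs_div, abs_of_pos hc0, div_le_iff₀ hc0]
    calc |x| ≤ π := hx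
    _ ≤ π * c := le_mul_of_one_le_right Real.pi_pos.le hc
  unfold B1
  rw [rep_abs hx, rep_abs hxc, abs_div, abs_of_pos hc0]
  by_cases hcase : |x| ≤ c * h
  · rw [if_pos hcase, if_pos (by rw [div_le_iff₀ hc0]; linarith)]
    field_simp
  · rw [if_neg hcase, if_neg (by rw [div_le_iff₀ hc0]; intro hcon; apply hcase; linarith), mul_zero]

lemma B_succ (h : ℝ) (s : ℕ) : B h (s + 2) = convR (B1 h) (B h (s + 1)) := rfl

lemma B_one (h : ℝ) : B h 1 = B1 h := rfl

lemma B_meas (h : ℝ) : ∀ s, Measurable (B h s) := by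
  intro s
  induction s with
  | zero => exact measurable_const
  | succ n ih =>
    cases n with
    | zero => exact B1_meas h
    | succ m =>
      rw [B_succ]
      unfold convR
      have hle : -π ≤ π := by linarith [Real.pi_pos]
      simp only [intervalIntegral.integral_of_le hle]
      have hF : StronglyMeasurable (fun p : ℝ × ℝ => B1 h p.2 * B h (m + 1) (p.1 - p.2)) :=
        (((B1_meas h).comp measurable_snd).mul
          (ih.comp (measurable_fst.sub measurable_snd))).stronglyMeasurable
      exact hF.integral_prod_right'.measurable

lemma B_bd (h : ℝ) : ∀ s, ∃ M, 0 ≤ M ∧ ∀ x, |B h s x| ≤ M := by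
  intro s
  induction s with
  | zero => exact ⟨0, le_refl _, fun x => by simp [B]⟩
  | succ n ih =>
    cases n with
    | zero => exact ⟨|1 / (2 * h)|, abs_nonneg _, B1_bd h⟩
    | succ m =>
      obtain ⟨M, hM0, hM⟩ := ih
      refine ⟨|1 / (2 * h)| * M * |π - (-π)|, by positivity, fun x => ?_⟩
      rw [B_succ]
      unfold convR
      have := intervalIntegral.norm_integral_le_of_norm_le_const
        (a := -π) (b := π) (C := |1 / (2 * h)| * M)
        (f := fun u => B1 h u * B h (m + 1) (x - u)) ?_
      · simpa [Real.norm_eq_abs] using this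
      · intro u _
        rw [Real.norm_eq_abs, abs_mul]
        exact mul_le_mul (B1_bd h u) (hM _) (abs_nonneg _) (abs_nonneg _)

lemma B_per (h : ℝ) : ∀ s, Function.Periodic (B h s) (2 * π) := by
  intro s
  induction s with
  | zero => intro x; rfl
  | succ n ih =>
    cases n with
    | zero => exact B1_per h
    | succ m =>
      intro x
      rw [B_succ]
      unfold convR
      apply intervalIntegral.integral_congr
      intro u _
      dsimp
      rw [show x + 2 * π - u = (x - u) + 2 * π by ring, ih (x - u)]

lemma B_even (h : ℝ) : ∀ s, ∀ x, B h s (-x) = B h s x := by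
  intro s
  induction s with
  | zero => intro x; rfl
  | succ n ih =>
    cases n with
    | zero => exact fun x => B1_even h x
    | succ m =>
      intro x
      rw [B_succ]
      unfold convR
      have h2 := intervalIntegral.integral_comp_neg (a := -π) (b := π)
        (fun t => B1 h t * B h (m+1) (-x - t))
      calc (∫ u in (-π)..π, B1 h u * B h (m+1) (-x - u))
          = ∫ u in (-π)..(- -π), (fun t => B1 h t * B h (m+1) (-x - t)) u := by
            rw [neg_neg]
        _ = ∫ u in (-π)..π, (fun t => B1 h t * B h (m+1) (-x - t)) (-u) := h2.symm
        _ = ∫ u in (-π)..π, B1 h u * B h (m+1) (x - u) := by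
            apply intervalIntegral.integral_congr
            intro u _
            dsimp
            rw [B1_even, show -x - -u = -(x - u) by ring, ih (x - u)]

lemma B_intgr (h : ℝ) (s : ℕ) (a b : ℝ) : IntervalIntegrable (B h s) volume a b := by
  obtain ⟨M, _, hM⟩ := B_bd h s
  rw [intervalIntegrable_iff]
  apply Measure.integrableOn_of_bounded (M := M)
  · rw [Set.uIoc]; exact (measure_Ioc_lt_top).ne
  · exact (B_meas h s).aestronglyMeasurable
  · exact MeasureTheory.ae_of_all _ (fun x => by rw [Real.norm_eq_abs]; exact hM x)

lemma meas_bd_intgr {g : ℝ → ℝ} (hm : Measurable g) (M : ℝ) (hb : ∀ x, |g x| ≤ M)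
    (a b : ℝ) : IntervalIntegrable g volume a b := by
  rw [intervalIntegrable_iff]
  apply Measure.integrableOn_of_bounded (M := M)
  · rw [Set.uIoc]; exact (measure_Ioc_lt_top).ne
  · exact hm.aestronglyMeasurable
  · exact MeasureTheory.ae_of_all _ (fun x => by rw [Real.norm_eq_abs]; exact hb x)

end Stmt7Aux
namespace Stmt7Aux

open intervalIntegral Set

lemma B_zero_ext {h : ℝ} {s : ℕ} (hh : 0 ≤ h)
    (hz : ∀ x : ℝ, ((s:ℝ)+1) * h < |x| → |x| ≤ π → B h (s+1) x = 0) :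
    ∀ x : ℝ, ((s:ℝ)+1) * h < |x| → |x| < 2*π - ((s:ℝ)+1)*h → B h (s+1) x = 0 := by
  have key : ∀ x : ℝ, 0 ≤ x → ((s:ℝ)+1)*h < |x| → |x| < 2*π - ((s:ℝ)+1)*h →
      B h (s+1) x = 0 := by
    intro x hx0 h1 h2
    by_cases hle : |x| ≤ π
    · exact hz x h1 hle
    · push_neg at hle
      have hxx : |x| = x := abs_of_nonneg hx0
      have hsh : 0 ≤ ((s:ℝ)+1)*h := by positivity
      rw [hxx] at h1 h2 hle
      have hper := B_per h (s+1) (x - 2*π)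
      rw [show x - 2*π + 2*π = x by ring] at hper
      rw [hper]
      apply hz
      · rw [abs_of_nonpos (by linarith : x - 2*π ≤ 0)]
        linarith
      · rw [abs_of_nonpos (by linarith : x - 2*π ≤ 0)]
        linarith
  intro x h1 h2
  rcases le_total 0 x with hx | hx
  · exact key x hx h1 h2
  · rw [← B_even h (s+1) x]
    exact key (-x) (by linarith) (by rwa [abs_neg]) (by rwa [abs_neg])

lemma B_zero {h : ℝ} (hh : 0 < h) :
    ∀ s : ℕ, ∀ x : ℝ, ((s:ℝ)+1) * h < π → ((s:ℝ)+1) * h < |x| → |x| ≤ π →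
      B h (s+1) x = 0 := by
  intro s
  induction s with
  | zero =>
    intro x _ h2 h3
    rw [B_one]
    apply B1_zero _ h3
    push_cast at h2
    linarith
  | succ m ih =>
    intro x hπ h1 h2
    push_cast at hπ h1
    rw [B_succ]
    unfold convR
    have hπ' : ((m:ℝ)+1) * h < π := by nlinarith
    have hzero : Set.EqOn (fun u => B1 h u * B h (m+1) (x - u)) (fun _ => (0:ℝ))
        (Set.uIcc (-π) π) := by
      intro u hu
      rw [Set.uIcc_of_le (by linarith [Real.pi_pos] : -π ≤ π)] at hu
      have huabs : |u| ≤ π := abs_le.2 ⟨hu.1, hu.2⟩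
      dsimp only
      by_cases hB1 : B1 h u = 0
      · rw [hB1, zero_mul]
      · have huh : |u| ≤ h := by
          have := B1_ne0 hB1
          rwa [rep_abs huabs] at this
        have hz2 : B h (m+1) (x - u) = 0 := by
          apply B_zero_ext hh.le (fun y hy1 hy2 => ih y hπ' hy1 hy2)
          · have := abs_sub_abs_le_abs_sub x u
            linarith
          · have : |x - u| ≤ |x| + |u| := abs_sub x u
            linarith
        rw [hz2, mul_zero]
    rw [intervalIntegral.integral_congr hzero, intervalIntegral.integral_zero]

lemma B1_mass {h : ℝ} (hh : 0 < h) (hπ : h < π) : (∫ u in (-π)..π, B1 h u) = 1 := by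
  have hii : ∀ a b : ℝ, IntervalIntegrable (B1 h) volume a b :=
    meas_bd_intgr (B1_meas h) _ (B1_bd h)
  have hae : ∀ c : ℝ, ∀ᵐ u : ℝ, u ≠ c := by
    intro c
    rw [MeasureTheory.ae_iff]
    convert Real.volume_singleton (a := c) using 2
    ext y; simp
  have z1 : (∫ u in (-π)..(-h), B1 h u) = 0 := by
    rw [show (0:ℝ) = ∫ u in (-π)..(-h), (0:ℝ) by simp]
    apply intervalIntegral.integral_congr_ae
    filter_upwards [hae (-h)] with u hu hu2
    rw [Set.uIoc_of_le (by linarith : -π ≤ -h)] at hu2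
    apply B1_zero
    · rw [abs_of_nonpos (by linarith [hu2.2] : u ≤ 0)]
      rcases lt_or_eq_of_le hu2.2 with hlt | heq
      · linarith
      · exact absurd heq hu
    · rw [abs_of_nonpos (by linarith [hu2.2] : u ≤ 0)]
      linarith [hu2.1]
  have z2 : (∫ u in h..π, B1 h u) = 0 := by
    rw [show (0:ℝ) = ∫ u in h..π, (0:ℝ) by simp]
    apply intervalIntegral.integral_congr_ae
    filter_upwards [hae h] with u hu hu2
    rw [Set.uIoc_of_le (by linarith : h ≤ π)] at hu2
    apply B1_zero
    · rw [abs_of_pos (by linarith [hu2.1] : 0 < u)]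
      exact hu2.1
    · rw [abs_of_pos (by linarith [hu2.1] : 0 < u)]
      exact hu2.2
  have mid : (∫ u in (-h)..h, B1 h u) = 1 := by
    have hcongr : Set.EqOn (B1 h) (fun _ => 1/(2*h)) (Set.uIcc (-h) h) := by
      intro u hu
      rw [Set.uIcc_of_le (by linarith : -h ≤ h)] at hu
      have huabs : |u| ≤ h := abs_le.2 ⟨hu.1, hu.2⟩
      unfold B1
      rw [if_pos (by rw [rep_abs (by linarith [abs_le.1 huabs] : |u| ≤ π)]; exact huabs)]
    rw [intervalIntegral.integral_congr hcongr, intervalIntegral.integral_const,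
      smul_eq_mul]
    field_simp
    ring
  have e1 := intervalIntegral.integral_add_adjacent_intervals
    (hii (-π) (-h)) (hii (-h) π)
  have e2 := intervalIntegral.integral_add_adjacent_intervals
    (hii (-h) h) (hii h π)
  rw [← e1, ← e2, z1, z2, mid]
  ring

end Stmt7Aux
namespace Stmt7Aux

open intervalIntegral Set

lemma B_mass {h : ℝ} (hh : 0 < h) :
    ∀ s : ℕ, ((s:ℝ)+1) * h < π → (∫ u in (-π)..π, B h (s+1) u) = 1 := by
  intro s
  induction s with
  | zero =>
    intro hπ
    rw [B_one]
    exact B1_mass hh (by push_cast at hπ; linarith)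
  | succ m ih =>
    intro hπ
    push_cast at hπ
    have hπ' : ((m:ℝ)+1) * h < π := by nlinarith
    have hle : -π ≤ π := by linarith [Real.pi_pos]
    show (∫ u in (-π)..π, convR (B1 h) (B h (m+1)) u) = 1
    unfold convR
    set μ := volume.restrict (Set.Ioc (-π) π) with hμ
    haveI : IsFiniteMeasure μ := by
      constructor
      rw [hμ, Measure.restrict_apply_univ]
      exact measure_Ioc_lt_top
    obtain ⟨M, hM0, hM⟩ := B_bd h (m+1)
    have hmeasF : Measurable (fun p : ℝ × ℝ => B1 h p.2 * B h (m+1) (p.1 - p.2)) :=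
      ((B1_meas h).comp measurable_snd).mul
        ((B_meas h (m+1)).comp (measurable_fst.sub measurable_snd))
    have hint : Integrable (Function.uncurry
        (fun x u => B1 h u * B h (m+1) (x - u))) (μ.prod μ) := by
      constructor
      · exact hmeasF.aestronglyMeasurable
      · apply MeasureTheory.HasFiniteIntegral.of_bounded (C := |1/(2*h)| * M)
        apply MeasureTheory.ae_of_all
        rintro ⟨x, u⟩
        simp only [Function.uncurry, Real.norm_eq_abs, abs_mul]
        exact mul_le_mul (B1_bd h u) (hM _) (abs_nonneg _) (abs_nonneg _)
    have inner1 : ∀ u : ℝ, (∫ x, B h (m+1) (x - u) ∂μ) = 1 := by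
      intro u
      rw [hμ, ← intervalIntegral.integral_of_le hle,
        intervalIntegral.integral_comp_sub_right (fun t => B h (m+1) t) u]
      have hshift := (B_per h (m+1)).intervalIntegral_add_eq (-π - u) (-π)
      rw [show -π - u + 2*π = π - u by ring, show -π + 2*π = π by ring] at hshift
      rw [hshift]
      exact ih hπ'
    calc (∫ x in (-π)..π, ∫ u in (-π)..π, B1 h u * B h (m+1) (x - u))
        = ∫ x, (∫ u, B1 h u * B h (m+1) (x - u) ∂μ) ∂μ := by
          simp only [intervalIntegral.integral_of_le hle, hμ]
      _ = ∫ u, (∫ x, B1 h u * B h (m+1) (x - u) ∂μ) ∂μ :=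
          MeasureTheory.integral_integral_swap hint
      _ = ∫ u, (B1 h u * ∫ x, B h (m+1) (x - u) ∂μ) ∂μ := by
          simp only [MeasureTheory.integral_const_mul]
      _ = ∫ u, B1 h u ∂μ := by
          apply MeasureTheory.integral_congr_ae
          apply MeasureTheory.ae_of_all
          intro u
          simp only [inner1, mul_one]
      _ = ∫ u in (-π)..π, B1 h u := by
          rw [hμ, ← intervalIntegral.integral_of_le hle]
      _ = 1 := B1_mass hh (by nlinarith [mul_nonneg (Nat.cast_nonneg m) hh.le])

lemma B_scale {h : ℝ} (hh : 0 < h) :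
    ∀ s : ℕ, ∀ c : ℝ, 1 ≤ c → c * (((s:ℝ)+1) * h) < π → ∀ v : ℝ, |v| ≤ π →
      B (c*h) (s+1) v = c⁻¹ * B h (s+1) (v/c) := by
  intro s
  induction s with
  | zero =>
    intro c hc hπ v hv
    rw [B_one, B_one]
    exact B1_scale hc hh (by push_cast at hπ; nlinarith) v hv
  | succ m ih =>
    intro c hc hπ v hv
    push_cast at hπ
    have hc0 : (0:ℝ) < c := lt_of_lt_of_le one_pos hc
    have hch : 0 < c * h := by positivity
    have hm2 : (0:ℝ) ≤ (m:ℝ) := Nat.cast_nonneg m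
    have hπm : ((m:ℝ)+1) * (c*h) < π := by nlinarith
    have hmono : ((m:ℝ)+1) * h ≤ c * (((m:ℝ)+1) * h) :=
      le_mul_of_one_le_left (by positivity) hc
    have hπm' : ((m:ℝ)+1) * h < π := by nlinarith
    obtain ⟨M, hM0, hM⟩ := B_bd h (m+1)
    show convR (B1 (c*h)) (B (c*h) (m+1)) v = c⁻¹ * convR (B1 h) (B h (m+1)) (v/c)
    unfold convR
    have stepA : Set.EqOn (fun u => B1 (c*h) u * B (c*h) (m+1) (v - u))
        (fun u => c⁻¹ * c⁻¹ *
          ((fun t => B1 h t * B h (m+1) (v/c - t)) (u / c)))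
        (Set.uIcc (-π) π) := by
      intro u hu
      rw [Set.uIcc_of_le (by linarith [Real.pi_pos] : -π ≤ π)] at hu
      have huabs : |u| ≤ π := abs_le.2 ⟨hu.1, hu.2⟩
      dsimp only
      rw [B1_scale hc hh (by nlinarith) u huabs]
      by_cases hB1 : B1 h (u/c) = 0
      · rw [hB1]; ring
      · have hucπ : |u/c| ≤ π := by
          rw [abs_div, abs_of_pos hc0, div_le_iff₀ hc0]
          nlinarith [Real.pi_pos]
        have h1 : |u| ≤ c * h := by
          have h2' := B1_ne0 hB1
          rw [rep_abs hucπ, abs_div, abs_of_pos hc0, div_le_iff₀ hc0] at h2'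
          linarith
        have key : B (c*h) (m+1) (v - u) = c⁻¹ * B h (m+1) ((v-u)/c) := by
          by_cases hvu : |v - u| ≤ π
          · exact ih c hc (by nlinarith) (v - u) hvu
          · push_neg at hvu
            have hub : |v - u| ≤ π + c*h := by
              have h3 : |v - u| ≤ |v| + |u| := abs_sub v u
              linarith
            have e1 : B (c*h) (m+1) (v - u) = 0 := by
              apply B_zero_ext hch.le
                (fun y hy1 hy2 => B_zero hch m y hπm hy1 hy2)
              · nlinarith
              · nlinarith
            have e2 : B h (m+1) ((v-u)/c) = 0 := by
              apply B_zero_ext hh.le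
                (fun y hy1 hy2 => B_zero hh m y hπm' hy1 hy2)
              · rw [abs_div, abs_of_pos hc0, lt_div_iff₀ hc0]
                nlinarith
              · rw [abs_div, abs_of_pos hc0, div_lt_iff₀ hc0]
                have hπducky : π ≤ π * c := le_mul_of_one_le_right Real.pi_pos.le hc
                nlinarith [Real.pi_pos]
            rw [e1, e2, mul_zero]
        rw [key, show (v - u)/c = v/c - u/c by ring]
        ring
    rw [intervalIntegral.integral_congr stepA]
    rw [intervalIntegral.integral_const_mul]
    rw [intervalIntegral.integral_comp_div
      (f := fun t => B1 h t * B h (m+1) (v/c - t)) hc0.ne']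
    have hGmeas : Measurable (fun t => B1 h t * B h (m+1) (v/c - t)) :=
      (B1_meas h).mul ((B_meas h (m+1)).comp (measurable_const.sub measurable_id))
    have hGbd : ∀ t, |B1 h t * B h (m+1) (v/c - t)| ≤ |1/(2*h)| * M := by
      intro t
      rw [abs_mul]
      exact mul_le_mul (B1_bd h t) (hM _) (abs_nonneg _) (abs_nonneg _)
    have hGi : ∀ a b : ℝ, IntervalIntegrable
        (fun t => B1 h t * B h (m+1) (v/c - t)) volume a b :=
      meas_bd_intgr hGmeas _ hGbd
    have hπc : π / c ≤ π := by
      rw [div_le_iff₀ hc0]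
      nlinarith [Real.pi_pos]
    have hhπc : h < π / c := by
      rw [lt_div_iff₀ hc0]
      nlinarith
    have z1 : (∫ t in (-π)..((-π)/c), B1 h t * B h (m+1) (v/c - t)) = 0 := by
      rw [show (0:ℝ) = ∫ t in (-π)..((-π)/c), (0:ℝ) by simp]
      apply intervalIntegral.integral_congr
      intro t ht
      rw [Set.uIcc_of_le (by rw [neg_div]; linarith : -π ≤ (-π)/c)] at ht
      have ht1 : t ≤ -(π/c) := by
        have := ht.2
        rwa [neg_div] at this
      have hpc0 : 0 < π / c := div_pos Real.pi_pos hc0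
      have habs : π / c ≤ |t| := by
        rw [abs_of_nonpos (by linarith : t ≤ 0)]
        linarith
      dsimp only
      rw [B1_zero (by linarith : h < |t|)
        (by rw [abs_of_nonpos (by linarith : t ≤ 0)]; linarith [ht.1] : |t| ≤ π), zero_mul]
    have z2 : (∫ t in (π/c)..π, B1 h t * B h (m+1) (v/c - t)) = 0 := by
      rw [show (0:ℝ) = ∫ t in (π/c)..π, (0:ℝ) by simp]
      apply intervalIntegral.integral_congr
      intro t ht
      rw [Set.uIcc_of_le hπc] at ht
      have hpc0 : 0 < π / c := div_pos Real.pi_pos hc0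
      have habs : π / c ≤ |t| := by
        rw [abs_of_pos (by linarith [ht.1] : 0 < t)]
        exact ht.1
      dsimp only
      rw [B1_zero (by linarith : h < |t|)
        (by rw [abs_of_pos (by linarith [ht.1] : 0 < t)]; exact ht.2), zero_mul]
    have eA := intervalIntegral.integral_add_adjacent_intervals
      (hGi (-π) ((-π)/c)) (hGi ((-π)/c) π)
    have eB := intervalIntegral.integral_add_adjacent_intervals
      (hGi ((-π)/c) (π/c)) (hGi (π/c) π)
    have ext : (∫ t in ((-π)/c)..(π/c), B1 h t * B h (m+1) (v/c - t)) =
        ∫ t in (-π)..π, B1 h t * B h (m+1) (v/c - t) := by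
      linarith [eA, eB, z1, z2]
    rw [ext, smul_eq_mul]
    field_simp

end Stmt7Aux
namespace Stmt7Aux

open intervalIntegral Set

lemma meas_bd_intgrC {g : ℝ → ℂ} (hm : Measurable g) (M : ℝ) (hb : ∀ x, ‖g x‖ ≤ M)
    (a b : ℝ) : IntervalIntegrable g volume a b := by
  rw [intervalIntegrable_iff]
  apply Measure.integrableOn_of_bounded (M := M)
  · rw [Set.uIoc]; exact (measure_Ioc_lt_top).ne
  · exact hm.aestronglyMeasurable
  · exact MeasureTheory.ae_of_all _ hb

lemma intgrC_mul {f : ℝ → ℂ} (hf : Continuous f) {g : ℝ → ℝ} (hg : Measurable g)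
    (M : ℝ) (hgb : ∀ x, |g x| ≤ M) {φ : ℝ → ℝ} (hφ : Continuous φ) (a b : ℝ) :
    IntervalIntegrable (fun u => f (φ u) * ((g u : ℝ) : ℂ)) volume a b := by
  have hbase : IntervalIntegrable (fun u => ((g u : ℝ) : ℂ)) volume a b := by
    apply meas_bd_intgrC (g := fun u => ((g u : ℝ) : ℂ))
      (Complex.measurable_ofReal.comp hg) M
    intro x
    rw [Complex.norm_real, Real.norm_eq_abs]
    exact hgb x
  exact hbase.continuousOn_mul (hf.comp hφ).continuousOn

lemma conv_eq {f : ℝ → ℂ} (hf : Continuous f) (hper : Function.Periodic f (2*π))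
    {h : ℝ} (hh : 0 < h) (s : ℕ) {c : ℝ} (hc : 1 ≤ c)
    (hπ : c * (((s:ℝ)+1) * h) < π) (x : ℝ) :
    convC (B (c*h) (s+1)) f x =
      ∫ u in (-π)..π, f (x + c*u) * ((B h (s+1) u : ℝ) : ℂ) := by
  have hc0 : (0:ℝ) < c := lt_of_lt_of_le one_pos hc
  have hs0 : (0:ℝ) ≤ (s:ℝ) := Nat.cast_nonneg s
  have hπpos := Real.pi_pos
  have hle : -π ≤ π := by linarith
  unfold convC
  have e2 : (∫ w in (-π)..π, f w * ((B (c*h) (s+1) (x - w) : ℝ):ℂ)) =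
      ∫ t in (x - π)..(x + π), f (x - t) * ((B (c*h) (s+1) t : ℝ):ℂ) := by
    have hcs := intervalIntegral.integral_comp_sub_left (a := -π) (b := π)
      (fun t => f (x - t) * ((B (c*h) (s+1) t : ℝ):ℂ)) x
    have e1 : (∫ w in (-π)..π, f w * ((B (c*h) (s+1) (x - w) : ℝ):ℂ)) =
        ∫ w in (-π)..π, (fun t => f (x - t) * ((B (c*h) (s+1) t : ℝ):ℂ)) (x - w) := by
      apply intervalIntegral.integral_congr
      intro w _
      dsimp only
      rw [show x - (x - w) = w by ring]
    rw [e1, hcs, show x - -π = x + π by ring]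
  rw [e2]
  have hFper : Function.Periodic
      (fun t => f (x - t) * ((B (c*h) (s+1) t : ℝ):ℂ)) (2*π) := by
    intro t
    dsimp only
    have h1 := hper (x - t - 2*π)
    rw [show x - t - 2*π + 2*π = x - t by ring] at h1
    rw [show x - (t + 2*π) = x - t - 2*π by ring, h1, B_per (c*h) (s+1) t]
  have e3 := hFper.intervalIntegral_add_eq (x - π) (-π)
  rw [show x - π + 2*π = x + π by ring, show -π + 2*π = π by ring] at e3
  rw [e3]
  have e4 : (∫ t in (-π)..π, f (x - t) * ((B (c*h) (s+1) t : ℝ):ℂ)) =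
      ∫ t in (-π)..π, f (x + t) * ((B (c*h) (s+1) t : ℝ):ℂ) := by
    have h4 := intervalIntegral.integral_comp_neg (a := -π) (b := π)
      (fun t => f (x + t) * ((B (c*h) (s+1) t : ℝ):ℂ))
    have e5 : (∫ t in (-π)..π, f (x - t) * ((B (c*h) (s+1) t : ℝ):ℂ)) =
        ∫ t in (-π)..π, (fun t => f (x + t) * ((B (c*h) (s+1) t : ℝ):ℂ)) (-t) := by
      apply intervalIntegral.integral_congr
      intro t _
      dsimp only
      rw [show x + -t = x - t by ring, B_even]
    rw [e5, h4, neg_neg]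
  rw [e4]
  have e6 : (∫ t in (-π)..π, f (x + t) * ((B (c*h) (s+1) t : ℝ):ℂ)) =
      ∫ t in (-π)..π,
        (fun u => f (x + c*u) * (((c⁻¹ * B h (s+1) u : ℝ)):ℂ)) (t / c) := by
    apply intervalIntegral.integral_congr
    intro t ht
    rw [Set.uIcc_of_le hle] at ht
    have habs : |t| ≤ π := abs_le.2 ⟨ht.1, ht.2⟩
    dsimp only
    rw [B_scale hh s c hc hπ t habs, show x + c*(t/c) = x + t by field_simp]
  rw [e6, intervalIntegral.integral_comp_div
    (f := fun u => f (x + c*u) * (((c⁻¹ * B h (s+1) u : ℝ)):ℂ)) hc0.ne']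
  obtain ⟨M, hM0, hM⟩ := B_bd h (s+1)
  have hgm : Measurable (fun u => c⁻¹ * B h (s+1) u) :=
    measurable_const.mul (B_meas h (s+1))
  have hgb : ∀ u, |c⁻¹ * B h (s+1) u| ≤ |c⁻¹| * M := by
    intro u
    rw [abs_mul]
    exact mul_le_mul_of_nonneg_left (hM u) (abs_nonneg _)
  have hFi : ∀ a b : ℝ, IntervalIntegrable
      (fun u => f (x + c*u) * (((c⁻¹ * B h (s+1) u : ℝ)):ℂ)) volume a b :=
    fun a b => intgrC_mul hf hgm _ hgb
      (continuous_const.add (continuous_const.mul continuous_id)) a b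
  have hπc : π / c ≤ π := by
    rw [div_le_iff₀ hc0]; nlinarith
  have hsh : ((s:ℝ)+1) * h < π / c := by
    rw [lt_div_iff₀ hc0]; nlinarith
  have hshpos : 0 < ((s:ℝ)+1) * h := by positivity
  have z1 : (∫ u in (-π)..((-π)/c),
      f (x + c*u) * (((c⁻¹ * B h (s+1) u : ℝ)):ℂ)) = 0 := by
    rw [show (0:ℂ) = ∫ u in (-π)..((-π)/c), (0:ℂ) by simp]
    apply intervalIntegral.integral_congr
    intro u hu
    rw [Set.uIcc_of_le (by rw [neg_div]; linarith : -π ≤ (-π)/c)] at hu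
    have hu1 : u ≤ -(π/c) := by
      have := hu.2; rwa [neg_div] at this
    have hpc0 : 0 < π / c := div_pos hπpos hc0
    have habs1 : π / c ≤ |u| := by
      rw [abs_of_nonpos (by linarith : u ≤ 0)]; linarith
    have habs2 : |u| ≤ π := by
      rw [abs_of_nonpos (by linarith : u ≤ 0)]; linarith [hu.1]
    dsimp only
    rw [B_zero hh s u (by nlinarith) (by linarith) habs2]
    push_cast
    rw [mul_zero, mul_zero]
  have z2 : (∫ u in (π/c)..π,
      f (x + c*u) * (((c⁻¹ * B h (s+1) u : ℝ)):ℂ)) = 0 := by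
    rw [show (0:ℂ) = ∫ u in (π/c)..π, (0:ℂ) by simp]
    apply intervalIntegral.integral_congr
    intro u hu
    rw [Set.uIcc_of_le hπc] at hu
    have hpc0 : 0 < π / c := div_pos hπpos hc0
    have habs1 : π / c ≤ |u| := by
      rw [abs_of_pos (by linarith [hu.1] : 0 < u)]; exact hu.1
    have habs2 : |u| ≤ π := by
      rw [abs_of_pos (by linarith [hu.1] : 0 < u)]; exact hu.2
    dsimp only
    rw [B_zero hh s u (by nlinarith) (by linarith) habs2]
    push_cast
    rw [mul_zero, mul_zero]
  have eA := intervalIntegral.integral_add_adjacent_intervals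
    (hFi (-π) ((-π)/c)) (hFi ((-π)/c) π)
  have eB := intervalIntegral.integral_add_adjacent_intervals
    (hFi ((-π)/c) (π/c)) (hFi (π/c) π)
  have ext : (∫ u in ((-π)/c)..(π/c),
      f (x + c*u) * (((c⁻¹ * B h (s+1) u : ℝ)):ℂ)) =
      ∫ u in (-π)..π, f (x + c*u) * (((c⁻¹ * B h (s+1) u : ℝ)):ℂ) := by
    rw [← eA, ← eB, z1, z2]
    ring
  rw [ext]
  have e7 : (∫ u in (-π)..π, f (x + c*u) * (((c⁻¹ * B h (s+1) u : ℝ)):ℂ)) =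
      ((c⁻¹ : ℝ):ℂ) * ∫ u in (-π)..π, f (x + c*u) * ((B h (s+1) u : ℝ):ℂ) := by
    rw [← intervalIntegral.integral_const_mul]
    apply intervalIntegral.integral_congr
    intro u _
    dsimp only
    push_cast
    ring
  rw [e7, Complex.real_smul, ← mul_assoc, ← Complex.ofReal_mul,
    mul_inv_cancel₀ hc0.ne', Complex.ofReal_one, one_mul]

end Stmt7Aux
namespace Stmt7Aux

open intervalIntegral Set

lemma Iop_repr {f : ℝ → ℂ} (hf : Continuous f) (hper : Function.Periodic f (2*π))
    {h : ℝ} (hh : 0 < h) (s0 k : ℕ) (hk : 1 ≤ k)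
    (hπ : ((s0:ℝ)+1) * (k:ℝ) * h < π) (x : ℝ) (i : ℕ) (hi : i ≤ 2*k) :
    Iop x (((i:ℝ) - (k:ℝ)) * h) (s0+1) f =
      ∫ u in (-π)..π, f (x + ((i:ℝ) - (k:ℝ)) * u) * ((B h (s0+1) u : ℝ):ℂ) := by
  have hπpos := Real.pi_pos
  have hk1 : (1:ℝ) ≤ (k:ℝ) := by exact_mod_cast hk
  have hs0 : (0:ℝ) ≤ (s0:ℝ) := Nat.cast_nonneg s0
  have hπ' : ((s0:ℝ)+1) * h < π := by nlinarith
  by_cases hik : i = k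
  · subst hik
    have hδ : ((i:ℝ) - (i:ℝ)) * h = 0 := by ring
    rw [hδ]
    unfold Iop
    rw [if_pos (Or.inr rfl)]
    have e1 : (∫ u in (-π)..π, f (x + ((i:ℝ) - (i:ℝ)) * u) * ((B h (s0+1) u : ℝ):ℂ)) =
        ∫ u in (-π)..π, f x * ((B h (s0+1) u : ℝ):ℂ) := by
      apply intervalIntegral.integral_congr
      intro u _
      dsimp only
      rw [show ((i:ℝ) - (i:ℝ)) * u = 0 by ring, add_zero]
    rw [e1, intervalIntegral.integral_const_mul, intervalIntegral.integral_ofReal,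
      B_mass hh s0 hπ']
    norm_num
  · have hzℤ : (i:ℤ) ≠ (k:ℤ) := by exact_mod_cast hik
    have h1le : (1:ℤ) ≤ |(i:ℤ) - (k:ℤ)| := Int.one_le_abs (sub_ne_zero.2 hzℤ)
    set c : ℝ := |(i:ℝ) - (k:ℝ)| with hc_def
    have hcabs : c = ((|(i:ℤ) - (k:ℤ)| : ℤ) : ℝ) := by
      rw [hc_def]
      push_cast
      ring
    have hc1 : (1:ℝ) ≤ c := by
      rw [hcabs]
      exact_mod_cast h1le
    have hck : c ≤ (k:ℝ) := by
      rw [hc_def, abs_le]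
      constructor
      · have : (i:ℝ) ≥ 0 := Nat.cast_nonneg i
        linarith
      · have : (i:ℝ) ≤ 2*(k:ℝ) := by exact_mod_cast hi
        linarith
    have hπc : c * (((s0:ℝ)+1) * h) < π := by nlinarith
    have hδne : ((i:ℝ) - (k:ℝ)) * h ≠ 0 := by
      apply mul_ne_zero _ hh.ne'
      intro hcon
      apply hik
      have : (i:ℝ) = (k:ℝ) := by linarith [sub_eq_zero.1 hcon]
      exact_mod_cast this
    unfold Iop
    rw [if_neg (by push_neg; exact ⟨Nat.succ_ne_zero s0, hδne⟩)]
    rw [show |((i:ℝ) - (k:ℝ)) * h| = c * h by rw [abs_mul, abs_of_pos hh]]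
    rw [conv_eq hf hper hh s0 hc1 hπc x]
    rcases abs_cases ((i:ℝ) - (k:ℝ)) with ⟨hpos, _⟩ | ⟨hneg, _⟩
    · rw [← hc_def] at hpos
      rw [hpos]
    · rw [← hc_def] at hneg
      have hic : (i:ℝ) - (k:ℝ) = -c := by rw [hneg]; ring
      rw [hic]
      have h4 := intervalIntegral.integral_comp_neg (a := -π) (b := π)
        (fun u => f (x + c*u) * ((B h (s0+1) u : ℝ):ℂ))
      have e5 : (∫ u in (-π)..π, f (x + (-c)*u) * ((B h (s0+1) u : ℝ):ℂ)) =
          ∫ u in (-π)..π,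
            (fun u => f (x + c*u) * ((B h (s0+1) u : ℝ):ℂ)) (-u) := by
        apply intervalIntegral.integral_congr
        intro u _
        dsimp only
        rw [show c * -u = -c * u by ring, B_even]
      rw [e5, h4, neg_neg]

lemma coeff_eq (k i : ℕ) (hi : i ≤ 2*k) :
    (-1:ℂ)^((k:ℤ)-(i:ℤ)) * ((Nat.choose (2*k) i : ℂ) / (Nat.choose (2*k) k : ℂ))
      = (-1:ℂ)^k * ((Nat.choose (2*k) k : ℂ))⁻¹ *
        ((-1:ℂ)^(2*k - i) * (Nat.choose (2*k) i : ℂ)) := by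
  have h1 : (-1:ℂ)^((k:ℤ)-(i:ℤ)) = (-1:ℂ)^k * (-1:ℂ)^i := by
    rw [zpow_sub₀ (by norm_num : (-1:ℂ) ≠ 0), zpow_natCast, zpow_natCast,
      div_eq_mul_inv, ← inv_pow]
    norm_num
  have hii : ((-1:ℂ)^i) * ((-1:ℂ)^i) = 1 := by
    rw [← pow_add, ← two_mul, pow_mul]
    norm_num
  have h2k : (-1:ℂ)^(2*k) = 1 := by
    rw [pow_mul]
    norm_num
  have h2 : (-1:ℂ)^(2*k - i) = (-1:ℂ)^i := by
    calc (-1:ℂ)^(2*k-i) = (-1:ℂ)^(2*k-i) * (((-1:ℂ)^i) * ((-1:ℂ)^i)) := by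
          rw [hii, mul_one]
      _ = ((-1:ℂ)^(2*k)) * (-1:ℂ)^i := by
          rw [← mul_assoc, ← pow_add, Nat.sub_add_cancel hi]
      _ = (-1:ℂ)^i := by rw [h2k, one_mul]
  rw [h1, h2]
  ring

end Stmt7Aux
/-- Integral representation of the smoothing operator:
`w_{x,h,2k}^s f = (-1)^k C(2k,k)⁻¹ ∫_T Δ_u^{2k} f(x) B_h^s(u) du`. -/
theorem stmt7 (f : ℝ → ℂ) (hf : Continuous f) (hper : Function.Periodic f (2 * Real.pi))
    (k s : ℕ) (hk : 1 ≤ k) (hs : 1 ≤ s) (h : ℝ) (hpos : 0 < (s : ℝ) * (k : ℝ) * h)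
    (hlt : (s : ℝ) * (k : ℝ) * h < Real.pi) (x : ℝ) :
    wop x h k s f = (-1 : ℂ) ^ k * ((Nat.choose (2 * k) k : ℂ))⁻¹ *
      ∫ u in (-Real.pi)..Real.pi, deltaC (2 * k) u f x * ((B h s u : ℝ) : ℂ) := by
  classical
  obtain ⟨s0, rfl⟩ : ∃ s0, s = s0 + 1 := ⟨s - 1, (Nat.succ_pred_eq_of_pos hs).symm⟩
  have hπpos := Real.pi_pos
  have hk1 : (1:ℝ) ≤ (k:ℝ) := by exact_mod_cast hk
  have hs0 : (0:ℝ) ≤ (s0:ℝ) := Nat.cast_nonneg s0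
  have hpos' : 0 < ((s0:ℝ)+1) * (k:ℝ) * h := by push_cast at hpos; exact hpos
  have hπ : ((s0:ℝ)+1) * (k:ℝ) * h < Real.pi := by push_cast at hlt; exact hlt
  have hh : 0 < h := by
    by_contra hcon
    push_neg at hcon
    nlinarith [mul_nonneg (mul_nonneg (show (0:ℝ) ≤ (s0:ℝ)+1 by linarith)
      (show (0:ℝ) ≤ (k:ℝ) by linarith)) (neg_nonneg.2 hcon)]
  obtain ⟨M, hM0, hM⟩ := Stmt7Aux.B_bd h (s0+1)
  have hint : ∀ i : ℕ, IntervalIntegrable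
      (fun u => f (x + ((i:ℝ) - (k:ℝ)) * u) * ((B h (s0+1) u : ℝ):ℂ))
      volume (-Real.pi) Real.pi :=
    fun i => Stmt7Aux.intgrC_mul hf (Stmt7Aux.B_meas h (s0+1)) M hM
      (continuous_const.add (continuous_const.mul continuous_id)) (-Real.pi) Real.pi
  have step1 : (∫ u in (-Real.pi)..Real.pi, deltaC (2*k) u f x * ((B h (s0+1) u : ℝ):ℂ))
      = ∑ i ∈ Finset.range (2*k+1),
          ((-1:ℂ)^(2*k - i) * (Nat.choose (2*k) i : ℂ)) *
            ∫ u in (-Real.pi)..Real.pi,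
              f (x + ((i:ℝ) - (k:ℝ)) * u) * ((B h (s0+1) u : ℝ):ℂ) := by
    have e1 : (∫ u in (-Real.pi)..Real.pi, deltaC (2*k) u f x * ((B h (s0+1) u : ℝ):ℂ))
        = ∫ u in (-Real.pi)..Real.pi, ∑ i ∈ Finset.range (2*k+1),
            ((-1:ℂ)^(2*k - i) * (Nat.choose (2*k) i : ℂ)) *
              (f (x + ((i:ℝ) - (k:ℝ)) * u) * ((B h (s0+1) u : ℝ):ℂ)) := by
      apply intervalIntegral.integral_congr
      intro u _
      dsimp only
      unfold deltaC
      rw [Finset.sum_mul]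
      apply Finset.sum_congr rfl
      intro i _
      rw [show x - (((2*k : ℕ):ℝ)/2) * u + (i:ℝ) * u
        = x + ((i:ℝ) - (k:ℝ)) * u by push_cast; ring]
      ring
    rw [e1, intervalIntegral.integral_finset_sum]
    · apply Finset.sum_congr rfl
      intro i _
      rw [intervalIntegral.integral_const_mul]
    · intro i _
      exact (hint i).const_mul _
  have step2 : ∀ i ∈ Finset.range (2*k+1),
      Iop x (((i:ℝ) - (k:ℝ)) * h) (s0+1) f =
        ∫ u in (-Real.pi)..Real.pi,
          f (x + ((i:ℝ) - (k:ℝ)) * u) * ((B h (s0+1) u : ℝ):ℂ) := by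
    intro i hi
    exact Stmt7Aux.Iop_repr hf hper hh s0 k hk hπ x i
      (Nat.lt_succ_iff.1 (Finset.mem_range.1 hi))
  rw [step1, Finset.mul_sum]
  unfold wop
  apply Finset.sum_congr rfl
  intro i hi
  rw [step2 i hi, Stmt7Aux.coeff_eq k i (Nat.lt_succ_iff.1 (Finset.mem_range.1 hi))]
  ring
end
end

section
/- Let f be a continuous 2π-periodic function, k ≥ 1, s ≥ 1, and 0 < skh < π. Then sup_{x∈T} |w_{x,h,2k}^s f| ≤ C(2k,k)^{−1} · ω_{2k}(f, sh). -/
open scoped Real BigOperators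
open MeasureTheory

noncomputable section

/-! ### Auxiliary development for `stmt8` -/

namespace Stmt8Aux

open intervalIntegral Set

lemma rep_eq {x : ℝ} (h1 : -Real.pi ≤ x) (h2 : x < Real.pi) : rep x = x := by
  have hπ := Real.pi_pos
  have h0 : ⌊(x + Real.pi) / (2 * Real.pi)⌋ = 0 := by
    rw [Int.floor_eq_zero_iff]
    constructor
    · apply div_nonneg (by linarith) (by linarith)
    · rw [div_lt_one (by linarith)]; linarith
  simp [rep, h0]

lemma rep_periodic : Function.Periodic rep (2 * Real.pi) := by
  intro x
  have hπ := Real.pi_pos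
  have hne : (2 * Real.pi) ≠ 0 := by positivity
  have h1 : (x + 2 * Real.pi + Real.pi) / (2 * Real.pi)
      = (x + Real.pi) / (2 * Real.pi) + 1 := by field_simp; ring
  simp only [rep, h1, Int.floor_add_one]
  push_cast; ring

lemma measurable_rep : Measurable rep := by
  unfold rep
  apply measurable_id.sub
  apply measurable_const.mul
  exact measurable_from_top.comp (((measurable_id.add_const _).div_const _).floor)

lemma measurable_B1 (h : ℝ) : Measurable (B1 h) := by
  unfold B1
  exact Measurable.ite (measurableSet_le measurable_rep.abs measurable_const)
    measurable_const measurable_const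

lemma B1_abs_le {h : ℝ} (hh : 0 < h) (x : ℝ) : |B1 h x| ≤ (2 * h)⁻¹ := by
  unfold B1
  split
  · rw [abs_of_nonneg (by positivity), one_div]
  · simp; positivity

lemma B1_periodic (h : ℝ) : Function.Periodic (B1 h) (2 * Real.pi) := by
  intro x; unfold B1; rw [rep_periodic x]

lemma II_of_bound {F : ℝ → ℂ} (hm : AEStronglyMeasurable F volume) (C : ℝ)
    (hb : ∀ x, ‖F x‖ ≤ C) (a b : ℝ) : IntervalIntegrable F volume a b := by
  rw [intervalIntegrable_iff]
  refine Integrable.mono' (g := fun _ => C) ?_ hm.restrict (ae_of_all _ hb)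
  have : (volume (Set.uIoc a b)) < ⊤ := by rw [Set.uIoc]; exact measure_Ioc_lt_top
  exact (integrableOn_const_iff).mpr (Or.inr this)

lemma exists_bound {f : ℝ → ℂ} (hf : Continuous f)
    (hper : Function.Periodic f (2 * Real.pi)) : ∃ M, 0 ≤ M ∧ ∀ x, ‖f x‖ ≤ M := by
  obtain ⟨M, hM⟩ := (isCompact_Icc (a := (0:ℝ)) (b := 2 * Real.pi)).exists_bound_of_continuousOn
    hf.continuousOn
  refine ⟨max M 0, le_max_right _ _, fun x => ?_⟩
  obtain ⟨y, hy, hxy⟩ := hper.exists_mem_Ico₀ (by positivity) x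
  rw [hxy]
  exact le_trans (hM y ⟨hy.1, hy.2.le⟩) (le_max_left _ _)

lemma B_one (h : ℝ) : B h 1 = B1 h := rfl

lemma B_succ (h : ℝ) {s : ℕ} (hs : 1 ≤ s) : B h (s + 1) = convR (B1 h) (B h s) := by
  match s, hs with
  | (m+1), _ => rfl

lemma measurable_B (h : ℝ) : ∀ s, Measurable (B h s)
  | 0 => measurable_const
  | 1 => measurable_B1 h
  | (s+2) => by
    have IH := measurable_B h (s+1)
    have hrw : B h (s+2) = fun x => ∫ u in Set.Ioc (-Real.pi) Real.pi,
        B1 h u * B h (s+1) (x - u) := by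
      funext x
      rw [show B h (s+2) = convR (B1 h) (B h (s+1)) from rfl, convR,
        intervalIntegral.integral_of_le (by linarith [Real.pi_pos])]
    rw [hrw]
    have hsm : StronglyMeasurable fun p : ℝ × ℝ => B1 h p.2 * B h (s+1) (p.1 - p.2) :=
      (((measurable_B1 h).comp measurable_snd).mul
        (IH.comp (measurable_fst.sub measurable_snd))).stronglyMeasurable
    exact hsm.integral_prod_right'.measurable

lemma B_bound (h : ℝ) (hh : 0 < h) : ∀ s, ∃ C, 0 ≤ C ∧ ∀ x, |B h s x| ≤ C
  | 0 => ⟨0, le_refl _, by intro x; simp [B]⟩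
  | 1 => ⟨(2*h)⁻¹, by positivity, fun x => B1_abs_le hh x⟩
  | (s+2) => by
    obtain ⟨C, hC0, hC⟩ := B_bound h hh (s+1)
    refine ⟨(2*h)⁻¹ * C * |Real.pi - -Real.pi|, by positivity, fun x => ?_⟩
    have : B h (s+2) x = ∫ u in (-Real.pi)..Real.pi, B1 h u * B h (s+1) (x - u) := rfl
    rw [this, ← Real.norm_eq_abs]
    apply intervalIntegral.norm_integral_le_of_norm_le_const
    intro u _
    rw [Real.norm_eq_abs, abs_mul]
    exact mul_le_mul (B1_abs_le hh u) (hC _) (abs_nonneg _) (by positivity)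

/-- The one-layer averaging operator. -/
def Kop (δ : ℝ) (g : ℝ → ℂ) (x : ℝ) : ℂ := (2:ℂ)⁻¹ * ∫ t in (-1:ℝ)..1, g (x - δ * t)

/-- The iterated averaging operator (`s`-fold average with width `δ`). -/
def Jit (δ : ℝ) (f : ℝ → ℂ) : ℕ → ℝ → ℂ
  | 0 => f
  | (s+1) => Kop δ (Jit δ f s)

lemma Kop_zero (g : ℝ → ℂ) (x : ℝ) : Kop 0 g x = g x := by
  unfold Kop
  simp only [zero_mul, sub_zero, intervalIntegral.integral_const]
  have : ((1 : ℝ) - (-1 : ℝ)) • g x = (2 : ℂ) * g x := by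
    rw [Complex.real_smul]; norm_num
  rw [this, ← mul_assoc, inv_mul_cancel₀ (by norm_num : (2:ℂ) ≠ 0), one_mul]

lemma Kop_neg (δ : ℝ) (g : ℝ → ℂ) (x : ℝ) : Kop (-δ) g x = Kop δ g x := by
  unfold Kop
  congr 1
  have h := intervalIntegral.integral_comp_neg (a := (-1:ℝ)) (b := 1) (fun t => g (x - δ * t))
  simp only [neg_neg] at h
  rw [← h]
  apply intervalIntegral.integral_congr
  intro t _
  simp only
  congr 1
  ring

lemma Kop_abs (δ : ℝ) (g : ℝ → ℂ) (x : ℝ) : Kop |δ| g x = Kop δ g x := by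
  rcases abs_choice δ with hc | hc
  · rw [hc]
  · rw [hc]; exact Kop_neg δ g x

lemma Kop_cont {g : ℝ → ℂ} (hg : Continuous g) (δ : ℝ) : Continuous (Kop δ g) := by
  by_cases hδ : δ = 0
  · subst hδ
    have : Kop 0 g = g := funext (Kop_zero g)
    rw [this]; exact hg
  · have hF : Continuous (fun y : ℝ => ∫ v in (0:ℝ)..y, g v) :=
      intervalIntegral.continuous_primitive (fun a b => hg.intervalIntegrable a b) 0
    have key : ∀ x : ℝ, Kop δ g x
        = (2:ℂ)⁻¹ * (δ⁻¹ • ((∫ v in (0:ℝ)..(x+δ), g v) - ∫ v in (0:ℝ)..(x-δ), g v)) := by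
      intro x
      unfold Kop
      congr 1
      have h1 : ∫ t in (-1:ℝ)..1, g (x - δ * t)
          = δ⁻¹ • ∫ v in (δ * -1)..(δ * 1), (fun v => g (x - v)) v :=
        intervalIntegral.integral_comp_mul_left (fun v => g (x - v)) hδ
      rw [h1]
      congr 1
      rw [show δ * -1 = -δ by ring, show δ * 1 = δ by ring]
      rw [intervalIntegral.integral_comp_sub_left g x]
      rw [show x - δ = x + -δ by ring] at *
      rw [← intervalIntegral.integral_add_adjacent_intervals
        (hg.intervalIntegrable 0 (x + -δ)) (hg.intervalIntegrable (x + -δ) (x + δ))]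
      ring_nf
    have : Kop δ g = fun x => (2:ℂ)⁻¹ *
        (δ⁻¹ • ((∫ v in (0:ℝ)..(x+δ), g v) - ∫ v in (0:ℝ)..(x-δ), g v)) := funext key
    rw [this]
    exact continuous_const.mul (((hF.comp (continuous_id.add continuous_const)).sub
      (hF.comp (continuous_id.sub continuous_const))).const_smul δ⁻¹)

lemma Jit_cont {f : ℝ → ℂ} (hf : Continuous f) (δ : ℝ) : ∀ s, Continuous (Jit δ f s)
  | 0 => hf
  | (s+1) => Kop_cont (Jit_cont hf δ s) δ

lemma Jit_zero_delta (f : ℝ → ℂ) : ∀ s x, Jit 0 f s x = f x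
  | 0, x => rfl
  | (s+1), x => by
    show Kop 0 (Jit 0 f s) x = f x
    rw [Kop_zero, Jit_zero_delta f s x]

lemma Jit_bound {f : ℝ → ℂ} {M : ℝ} (hM : ∀ x, ‖f x‖ ≤ M) (δ : ℝ) :
    ∀ s x, ‖Jit δ f s x‖ ≤ M
  | 0, x => hM x
  | (s+1), x => by
    show ‖Kop δ (Jit δ f s) x‖ ≤ M
    have hM0 : 0 ≤ M := le_trans (norm_nonneg _) (hM 0)
    unfold Kop
    rw [norm_mul]
    have h2 : ‖(2:ℂ)⁻¹‖ = 2⁻¹ := by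
      rw [norm_inv]; norm_num
    rw [h2]
    have hint : ‖∫ t in (-1:ℝ)..1, Jit δ f s (x - δ * t)‖ ≤ M * |1 - (-1:ℝ)| :=
      intervalIntegral.norm_integral_le_of_norm_le_const
        (fun t _ => Jit_bound hM δ s (x - δ * t))
    rw [show |1 - (-1:ℝ)| = 2 by norm_num] at hint
    linarith

lemma per_shift (F : ℝ → ℂ) (hF : Function.Periodic F (2 * Real.pi)) (x : ℝ) :
    ∫ u in (-Real.pi)..Real.pi, F (x - u) = ∫ u in (-Real.pi)..Real.pi, F u := by
  rw [intervalIntegral.integral_comp_sub_left F x]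
  have h := hF.intervalIntegral_add_eq (x - Real.pi) (-Real.pi)
  rw [show x - Real.pi + 2 * Real.pi = x + Real.pi by ring,
    show -Real.pi + 2 * Real.pi = Real.pi by ring] at h
  rw [show x - -Real.pi = x + Real.pi by ring]
  exact h

lemma conv_B1 {h' : ℝ} (h0 : 0 < h') (hπ : h' < Real.pi) (g : ℝ → ℂ) (hg : Continuous g)
    (M : ℝ) (hM : ∀ y, ‖g y‖ ≤ M) (x : ℝ) :
    ∫ v in (-Real.pi)..Real.pi, g (x - v) * (B1 h' v : ℂ)
      = (2:ℂ)⁻¹ * ∫ t in (-1:ℝ)..1, g (x - h' * t) := by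
  have hπ0 := Real.pi_pos
  have hM0 : 0 ≤ M := le_trans (norm_nonneg _) (hM 0)
  set G : ℝ → ℂ := fun v => if v ∈ Set.Ioo (-h') h' then g (x - v) * ((2*h')⁻¹ : ℝ) else 0
    with hG
  have hGmeas : Measurable G := by
    apply Measurable.ite measurableSet_Ioo ?_ measurable_const
    exact ((hg.comp (continuous_const.sub continuous_id)).measurable).mul measurable_const
  have hGbd : ∀ v, ‖G v‖ ≤ M * (2*h')⁻¹ := by
    intro v
    rw [hG]
    dsimp only
    split
    · rw [norm_mul, Complex.norm_real, Real.norm_eq_abs, abs_of_nonneg (by positivity)]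
      exact mul_le_mul_of_nonneg_right (hM _) (by positivity)
    · simp; positivity
  have hGint : ∀ a b : ℝ, IntervalIntegrable G volume a b :=
    II_of_bound hGmeas.aestronglyMeasurable _ hGbd
  -- step 1 : a.e. congruence
  have step1 : ∫ v in (-Real.pi)..Real.pi, g (x - v) * (B1 h' v : ℂ)
      = ∫ v in (-Real.pi)..Real.pi, G v := by
    apply intervalIntegral.integral_congr_ae
    have hnull : (volume : Measure ℝ) ({-h', h'} : Set ℝ) = 0 :=
      ((Set.finite_singleton h').insert (-h')).measure_zero _
    filter_upwards [measure_eq_zero_iff_ae_notMem.mp hnull] with v hv hvI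
    rw [Set.uIoc_of_le (by linarith)] at hvI
    have hvne : v ≠ -h' ∧ v ≠ h' := by
      constructor <;> intro hc <;> exact hv (by rw [hc]; simp)
    rw [hG]
    dsimp only
    by_cases hmem : v ∈ Set.Ioo (-h') h'
    · have hrep : rep v = v := rep_eq (by linarith [hmem.1]) (by linarith [hmem.2])
      have : B1 h' v = (2*h')⁻¹ := by
        unfold B1
        rw [hrep, if_pos (abs_le.mpr ⟨hmem.1.le, hmem.2.le⟩), one_div]
      rw [if_pos hmem, this]
    · have hB0 : B1 h' v = 0 := by
        unfold B1
        rcases lt_or_eq_of_le hvI.2 with hlt | heq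
        · rw [rep_eq (by linarith [hvI.1]) hlt, if_neg]
          intro habs
          rcases abs_le.mp habs with ⟨ha1, ha2⟩
          rcases hvne with ⟨hne1, hne2⟩
          exact hmem ⟨lt_of_le_of_ne ha1 (Ne.symm hne1), lt_of_le_of_ne ha2 hne2⟩
        · subst heq
          have h1 : (2:ℝ) * Real.pi ≠ 0 := by positivity
          have hfl : ⌊(Real.pi + Real.pi) / (2 * Real.pi)⌋ = 1 := by
            rw [show (Real.pi + Real.pi) / (2 * Real.pi) = 1 by field_simp; ring]
            exact Int.floor_one
          have : rep Real.pi = -Real.pi := by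
            unfold rep; rw [hfl]; push_cast; ring
          rw [this, if_neg]
          rw [abs_neg, abs_of_pos hπ0]
          linarith
      rw [if_neg hmem, hB0]
      simp
  -- step 2 : split
  have hsplit : ∫ v in (-Real.pi)..Real.pi, G v
      = (∫ v in (-Real.pi)..(-h'), G v) + (∫ v in (-h')..h', G v) + ∫ v in h'..Real.pi, G v := by
    rw [intervalIntegral.integral_add_adjacent_intervals (hGint _ _) (hGint _ _),
      intervalIntegral.integral_add_adjacent_intervals (hGint _ _) (hGint _ _)]
  have hleft : (∫ v in (-Real.pi)..(-h'), G v) = 0 := by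
    rw [intervalIntegral.integral_congr (g := fun _ => (0:ℂ)) ?_, intervalIntegral.integral_const]
    · simp
    · intro v hv
      rw [Set.uIcc_of_le (by linarith)] at hv
      rw [hG]
      dsimp only
      rw [if_neg]
      intro hc
      exact absurd hc.1 (not_lt.mpr hv.2)
  have hright : (∫ v in h'..Real.pi, G v) = 0 := by
    rw [intervalIntegral.integral_congr (g := fun _ => (0:ℂ)) ?_, intervalIntegral.integral_const]
    · simp
    · intro v hv
      rw [Set.uIcc_of_le (by linarith)] at hv
      rw [hG]
      dsimp only
      rw [if_neg]
      intro hc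
      exact absurd hc.2 (not_lt.mpr hv.1)
  have hmid : (∫ v in (-h')..h', G v) = (∫ v in (-h')..h', g (x - v)) * ((2*h')⁻¹ : ℝ) := by
    rw [← intervalIntegral.integral_mul_const]
    apply intervalIntegral.integral_congr_ae
    have hnull : (volume : Measure ℝ) ({h'} : Set ℝ) = 0 := measure_singleton _
    filter_upwards [measure_eq_zero_iff_ae_notMem.mp hnull] with v hv hvI
    rw [Set.uIoc_of_le (by linarith)] at hvI
    rw [hG]
    dsimp only
    rw [if_pos]
    exact ⟨hvI.1, lt_of_le_of_ne hvI.2 (by simpa using hv)⟩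
  -- step 3 : substitution
  have hsub : (∫ v in (-h')..h', g (x - v)) = h' • ∫ t in (-1:ℝ)..1, g (x - h' * t) := by
    have h1 : ∫ t in (-1:ℝ)..1, (fun v => g (x - v)) (h' * t)
        = h'⁻¹ • ∫ v in (h' * -1)..(h' * 1), g (x - v) :=
      intervalIntegral.integral_comp_mul_left (fun v => g (x - v)) (ne_of_gt h0)
    rw [show h' * -1 = -h' by ring, show h' * 1 = h' by ring] at h1
    simp only at h1
    rw [h1, smul_smul, mul_inv_cancel₀ (ne_of_gt h0), one_smul]
  have hcast : (h' • ∫ t in (-1:ℝ)..1, g (x - h' * t)) * ((2*h')⁻¹ : ℝ)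
      = (2:ℂ)⁻¹ * ∫ t in (-1:ℝ)..1, g (x - h' * t) := by
    set I := ∫ t in (-1:ℝ)..1, g (x - h' * t)
    rw [Complex.real_smul, Complex.ofReal_inv]
    push_cast
    have hne : (h' : ℂ) ≠ 0 := by exact_mod_cast ne_of_gt h0
    field_simp
  rw [step1, hsplit, hleft, hright, hmid, hsub, hcast]
  ring

lemma Iop_eq_Jit {f : ℝ → ℂ} (hf : Continuous f) (hper : Function.Periodic f (2 * Real.pi))
    (M : ℝ) (hM : ∀ x, ‖f x‖ ≤ M) {δ : ℝ} (hδ0 : δ ≠ 0) (hδπ : |δ| < Real.pi) :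
    ∀ s, 1 ≤ s → ∀ x, Iop x δ s f = Jit δ f s x := by
  have hπ0 := Real.pi_pos
  have habs0 : 0 < |δ| := abs_pos.mpr hδ0
  intro s hs
  induction s, hs using Nat.le_induction with
  | base =>
    intro x
    rw [Iop, if_neg (by push_neg; exact ⟨one_ne_zero, hδ0⟩)]
    rw [show B |δ| 1 = B1 |δ| from rfl, convC]
    set F : ℝ → ℂ := fun v => f (x - v) * (B1 |δ| v : ℂ) with hFdef
    have hFper : Function.Periodic F (2 * Real.pi) := by
      intro v
      rw [hFdef]
      dsimp only
      rw [B1_periodic |δ| v, show x - (v + 2 * Real.pi) = (x - v) - 2 * Real.pi by ring,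
        hper.sub_eq]
    have h1 : (∫ u in (-Real.pi)..Real.pi, f u * (B1 |δ| (x - u) : ℂ))
        = ∫ u in (-Real.pi)..Real.pi, F (x - u) := by
      apply intervalIntegral.integral_congr
      intro u _
      rw [hFdef]
      dsimp only
      rw [sub_sub_cancel]
    rw [h1, per_shift F hFper x]
    have h2 : (∫ v in (-Real.pi)..Real.pi, F v)
        = (2:ℂ)⁻¹ * ∫ t in (-1:ℝ)..1, f (x - |δ| * t) :=
      conv_B1 habs0 hδπ f hf M hM x
    rw [h2]
    show _ = Kop δ f x
    rw [← Kop_abs δ f x]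
    rfl
  | succ s hs1 IH =>
    intro x
    have hππ : -Real.pi ≤ Real.pi := by linarith
    obtain ⟨C, hC0, hC⟩ := B_bound |δ| habs0 s
    haveI hfin : IsFiniteMeasure (volume.restrict (Set.Ioc (-Real.pi) Real.pi)) :=
      ⟨by rw [Measure.restrict_apply_univ]; exact measure_Ioc_lt_top⟩
    rw [Iop, if_neg (by push_neg; exact ⟨Nat.succ_ne_zero s, hδ0⟩)]
    rw [convC, B_succ |δ| hs1]
    -- expand the inner convolution and push the constant inside
    have h1 : (∫ u in (-Real.pi)..Real.pi, f u * ((convR (B1 |δ|) (B |δ| s)) (x - u) : ℂ))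
        = ∫ u in (-Real.pi)..Real.pi, ∫ v in (-Real.pi)..Real.pi,
            f u * (B1 |δ| v : ℂ) * (B |δ| s (x - u - v) : ℂ) := by
      apply intervalIntegral.integral_congr
      intro u _
      simp only [convR]
      rw [show ((∫ v in (-Real.pi)..Real.pi, B1 |δ| v * B |δ| s (x - u - v) : ℝ) : ℂ)
          = ∫ v in (-Real.pi)..Real.pi, ((B1 |δ| v * B |δ| s (x - u - v) : ℝ) : ℂ)
          from (intervalIntegral.integral_ofReal).symm]
      rw [← intervalIntegral.integral_const_mul]
      apply intervalIntegral.integral_congr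
      intro v _
      push_cast
      ring
    rw [h1]
    -- Fubini
    have hInt : Integrable (Function.uncurry fun u v =>
        f u * (B1 |δ| v : ℂ) * (B |δ| s (x - u - v) : ℂ))
        ((volume.restrict (Set.Ioc (-Real.pi) Real.pi)).prod
          (volume.restrict (Set.Ioc (-Real.pi) Real.pi))) := by
      have hmeas : Measurable (Function.uncurry fun u v =>
          f u * (B1 |δ| v : ℂ) * (B |δ| s (x - u - v) : ℂ)) := by
        apply Measurable.mul
        apply Measurable.mul
        · exact hf.measurable.comp measurable_fst
        · exact (Complex.measurable_ofReal.comp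
            ((measurable_B1 |δ|).comp measurable_snd))
        · exact Complex.measurable_ofReal.comp
            ((measurable_B |δ| s).comp ((measurable_const.sub measurable_fst).sub measurable_snd))
      refine Integrable.mono' (g := fun _ => M * (2 * |δ|)⁻¹ * C)
        (integrable_const _) hmeas.aestronglyMeasurable (ae_of_all _ ?_)
      rintro ⟨u, v⟩
      rw [Function.uncurry]
      dsimp only
      rw [norm_mul, norm_mul, Complex.norm_real, Complex.norm_real,
        Real.norm_eq_abs, Real.norm_eq_abs]
      have hMu := hM u
      have hB1v := B1_abs_le habs0 v
      have hBs := hC (x - u - v)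
      have h4 : 0 ≤ ‖f u‖ := norm_nonneg _
      have hM0' : 0 ≤ M := le_trans h4 hMu
      apply mul_le_mul _ hBs (abs_nonneg _) (mul_nonneg hM0' (by positivity))
      exact mul_le_mul hMu hB1v (abs_nonneg _) hM0'
    have h2 : (∫ u in (-Real.pi)..Real.pi, ∫ v in (-Real.pi)..Real.pi,
          f u * (B1 |δ| v : ℂ) * (B |δ| s (x - u - v) : ℂ))
        = ∫ v in Set.Ioc (-Real.pi) Real.pi, ∫ u in Set.Ioc (-Real.pi) Real.pi,
            f u * (B1 |δ| v : ℂ) * (B |δ| s (x - u - v) : ℂ) := by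
      rw [intervalIntegral.integral_of_le hππ]
      rw [show (fun u => ∫ v in (-Real.pi)..Real.pi,
          f u * (B1 |δ| v : ℂ) * (B |δ| s (x - u - v) : ℂ))
          = fun u => ∫ v in Set.Ioc (-Real.pi) Real.pi,
          f u * (B1 |δ| v : ℂ) * (B |δ| s (x - u - v) : ℂ) from
        funext fun u => intervalIntegral.integral_of_le hππ]
      exact MeasureTheory.integral_integral_swap hInt
    rw [h2]
    -- identify the inner integral with `Jit δ f s (x - v)`
    have h3 : ∀ v : ℝ, (∫ u in Set.Ioc (-Real.pi) Real.pi,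
          f u * (B1 |δ| v : ℂ) * (B |δ| s (x - u - v) : ℂ))
        = (B1 |δ| v : ℂ) * Jit δ f s (x - v) := by
      intro v
      have hmul : (∫ u in Set.Ioc (-Real.pi) Real.pi,
            f u * (B1 |δ| v : ℂ) * (B |δ| s (x - u - v) : ℂ))
          = (B1 |δ| v : ℂ) * ∫ u in Set.Ioc (-Real.pi) Real.pi,
              f u * (B |δ| s ((x - v) - u) : ℂ) := by
        rw [← MeasureTheory.integral_const_mul]
        apply MeasureTheory.integral_congr_ae
        apply ae_of_all
        intro u
        dsimp only
        rw [show x - u - v = x - v - u by ring]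
        ring
      rw [hmul]
      congr 1
      have : (∫ u in Set.Ioc (-Real.pi) Real.pi, f u * (B |δ| s ((x - v) - u) : ℂ))
          = convC (B |δ| s) f (x - v) := by
        rw [convC, intervalIntegral.integral_of_le hππ]
      rw [this]
      have hIop : convC (B |δ| s) f (x - v) = Iop (x - v) δ s f := by
        rw [Iop, if_neg (by push_neg; exact ⟨by omega, hδ0⟩)]
      rw [hIop, IH (x - v)]
    rw [show (fun v => ∫ u in Set.Ioc (-Real.pi) Real.pi,
        f u * (B1 |δ| v : ℂ) * (B |δ| s (x - u - v) : ℂ))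
        = fun v => (B1 |δ| v : ℂ) * Jit δ f s (x - v) from funext h3]
    rw [← intervalIntegral.integral_of_le hππ]
    have h5 : (∫ v in (-Real.pi)..Real.pi, (B1 |δ| v : ℂ) * Jit δ f s (x - v))
        = ∫ v in (-Real.pi)..Real.pi, Jit δ f s (x - v) * (B1 |δ| v : ℂ) := by
      apply intervalIntegral.integral_congr
      intro v _
      ring
    rw [h5, conv_B1 habs0 hδπ (Jit δ f s) (Jit_cont hf δ s) M (fun y => Jit_bound hM δ s y) x]
    show _ = Kop δ (Jit δ f s) x
    rw [← Kop_abs δ (Jit δ f s) x]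
    rfl

lemma deltaC_bound {f : ℝ → ℂ} {M : ℝ} (hM : ∀ x, ‖f x‖ ≤ M) (m : ℕ) (u x : ℝ) :
    ‖deltaC m u f x‖ ≤ 2 ^ m * M := by
  have hM0 : 0 ≤ M := le_trans (norm_nonneg _) (hM 0)
  unfold deltaC
  calc ‖∑ i ∈ Finset.range (m + 1), ((-1 : ℂ) ^ (m - i)) * (Nat.choose m i : ℂ) *
        f (x - ((m : ℝ) / 2) * u + (i : ℝ) * u)‖
      ≤ ∑ i ∈ Finset.range (m + 1), ‖((-1 : ℂ) ^ (m - i)) * (Nat.choose m i : ℂ) *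
        f (x - ((m : ℝ) / 2) * u + (i : ℝ) * u)‖ := norm_sum_le _ _
    _ ≤ ∑ i ∈ Finset.range (m + 1), (Nat.choose m i : ℝ) * M := by
        apply Finset.sum_le_sum
        intro i _
        rw [norm_mul, norm_mul, norm_pow, norm_neg, norm_one, one_pow, one_mul,
          Complex.norm_natCast]
        exact mul_le_mul_of_nonneg_left (hM _) (Nat.cast_nonneg _)
    _ = 2 ^ m * M := by
        rw [← Finset.sum_mul]
        congr 1
        rw [show ∑ i ∈ Finset.range (m + 1), (Nat.choose m i : ℝ)
            = ((∑ i ∈ Finset.range (m + 1), Nat.choose m i : ℕ) : ℝ) by push_cast; rfl,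
          Nat.sum_range_choose]
        push_cast; rfl

lemma bddAbove_modulus {f : ℝ → ℂ} {M : ℝ} (hM : ∀ x, ‖f x‖ ≤ M) (m : ℕ) (δ : ℝ) :
    BddAbove {y : ℝ | ∃ x h : ℝ, |h| < δ ∧ y = ‖deltaC m h f x‖} := by
  refine ⟨2 ^ m * M, ?_⟩
  rintro y ⟨x, u, _, rfl⟩
  exact deltaC_bound hM m u x

lemma le_modulus_of_lt {f : ℝ → ℂ} {M : ℝ} (hM : ∀ x, ‖f x‖ ≤ M) (m : ℕ) {δ u : ℝ}
    (x : ℝ) (hu : |u| < δ) : ‖deltaC m u f x‖ ≤ modulus m f δ := by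
  exact le_csSup (bddAbove_modulus hM m δ) ⟨x, u, hu, rfl⟩

lemma le_modulus_of_le {f : ℝ → ℂ} (hf : Continuous f) {M : ℝ} (hM : ∀ x, ‖f x‖ ≤ M)
    (m : ℕ) {δ u : ℝ} (x : ℝ) (hδ : 0 < δ) (hu : |u| ≤ δ) :
    ‖deltaC m u f x‖ ≤ modulus m f δ := by
  have hcont : Continuous fun v : ℝ => ‖deltaC m v f x‖ := by
    apply Continuous.norm
    unfold deltaC
    apply continuous_finset_sum
    intro i _
    exact continuous_const.mul (hf.comp (by continuity))
  have hclosed : IsClosed {v : ℝ | ‖deltaC m v f x‖ ≤ modulus m f δ} :=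
    isClosed_le hcont continuous_const
  have hsub : Set.Ioo (-δ) δ ⊆ {v : ℝ | ‖deltaC m v f x‖ ≤ modulus m f δ} := fun v hv =>
    le_modulus_of_lt hM m x (abs_lt.mpr ⟨hv.1, hv.2⟩)
  have hcl := closure_minimal hsub hclosed
  rw [closure_Ioo (by linarith : -δ ≠ δ)] at hcl
  exact hcl (abs_le.mp hu)

lemma neg_one_zpow_sub (k i : ℕ) : (-1 : ℂ) ^ ((k : ℤ) - (i : ℤ)) = (-1) ^ k * (-1) ^ i := by
  rw [zpow_sub₀ (by norm_num : (-1 : ℂ) ≠ 0), zpow_natCast, zpow_natCast, div_eq_mul_inv]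
  congr 1
  rw [← inv_pow, show ((-1 : ℂ))⁻¹ = -1 by norm_num]

lemma neg_one_pow_two_mul_sub (k i : ℕ) (hi : i ≤ 2 * k) :
    (-1 : ℂ) ^ (2 * k - i) = (-1) ^ i := by
  have h1 : (-1 : ℂ) ^ i * (-1 : ℂ) ^ i = 1 := by
    rw [← pow_add]
    exact Even.neg_one_pow ⟨i, rfl⟩
  have h2 : (-1 : ℂ) ^ (2 * k - i) * (-1 : ℂ) ^ i = 1 := by
    rw [← pow_add, Nat.sub_add_cancel hi]
    exact Even.neg_one_pow ⟨k, by ring⟩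
  calc (-1 : ℂ) ^ (2 * k - i) = (-1 : ℂ) ^ (2 * k - i) * ((-1 : ℂ) ^ i * (-1 : ℂ) ^ i) := by
        rw [h1, mul_one]
    _ = ((-1 : ℂ) ^ (2 * k - i) * (-1 : ℂ) ^ i) * (-1 : ℂ) ^ i := by ring
    _ = (-1 : ℂ) ^ i := by rw [h2, one_mul]

lemma bound_aux {f : ℝ → ℂ} (hf : Continuous f) {M : ℝ} (hM : ∀ x, ‖f x‖ ≤ M)
    (k s : ℕ) (h : ℝ) (hh : 0 < h) (hs : 1 ≤ s) :
    ∀ (s' : ℕ) (c x : ℝ), (s' : ℝ) + |c| ≤ (s : ℝ) →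
      ‖∑ i ∈ Finset.range (2 * k + 1), ((-1 : ℂ) ^ ((k : ℤ) - (i : ℤ))) *
          (Nat.choose (2 * k) i : ℂ) *
          Jit (((i : ℝ) - (k : ℝ)) * h) f s' (x - ((i : ℝ) - (k : ℝ)) * h * c)‖
        ≤ modulus (2 * k) f ((s : ℝ) * h) := by
  have hs1 : (1 : ℝ) ≤ (s : ℝ) := by exact_mod_cast hs
  intro s'
  induction s' with
  | zero =>
    intro c x hc
    simp only [Nat.cast_zero, zero_add] at hc
    have hkey : (∑ i ∈ Finset.range (2 * k + 1), ((-1 : ℂ) ^ ((k : ℤ) - (i : ℤ))) *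
          (Nat.choose (2 * k) i : ℂ) *
          Jit (((i : ℝ) - (k : ℝ)) * h) f 0 (x - ((i : ℝ) - (k : ℝ)) * h * c))
        = (-1 : ℂ) ^ k * deltaC (2 * k) (-(h * c)) f x := by
      rw [deltaC, Finset.mul_sum]
      apply Finset.sum_congr rfl
      intro i hi
      have hi2k : i ≤ 2 * k := Nat.lt_succ_iff.mp (Finset.mem_range.mp hi)
      show ((-1 : ℂ) ^ ((k : ℤ) - (i : ℤ))) * (Nat.choose (2 * k) i : ℂ) * f _ = _
      rw [neg_one_zpow_sub, neg_one_pow_two_mul_sub k i hi2k]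
      rw [show x - ((i : ℝ) - (k : ℝ)) * h * c
          = x - (((2 * k : ℕ) : ℝ) / 2) * (-(h * c)) + (i : ℝ) * (-(h * c)) by push_cast; ring]
      ring
    rw [hkey, norm_mul, norm_pow, norm_neg, norm_one, one_pow, one_mul]
    apply le_modulus_of_le hf hM (2 * k) x (by positivity)
    rw [abs_neg, abs_mul, abs_of_pos hh]
    calc h * |c| ≤ h * (s : ℝ) := by
          apply mul_le_mul_of_nonneg_left hc hh.le
      _ = (s : ℝ) * h := by ring
  | succ s' IH =>
    intro c x hc
    push_cast at hc
    have hstep : (∑ i ∈ Finset.range (2 * k + 1), ((-1 : ℂ) ^ ((k : ℤ) - (i : ℤ))) *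
          (Nat.choose (2 * k) i : ℂ) *
          Jit (((i : ℝ) - (k : ℝ)) * h) f (s' + 1) (x - ((i : ℝ) - (k : ℝ)) * h * c))
        = (2 : ℂ)⁻¹ * ∫ t in (-1:ℝ)..1, ∑ i ∈ Finset.range (2 * k + 1),
            ((-1 : ℂ) ^ ((k : ℤ) - (i : ℤ))) * (Nat.choose (2 * k) i : ℂ) *
            Jit (((i : ℝ) - (k : ℝ)) * h) f s' (x - ((i : ℝ) - (k : ℝ)) * h * (c + t)) := by
      rw [intervalIntegral.integral_finset_sum, Finset.mul_sum]
      · apply Finset.sum_congr rfl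
        intro i _
        set δi := ((i : ℝ) - (k : ℝ)) * h with hδi
        show ((-1 : ℂ) ^ ((k : ℤ) - (i : ℤ))) * (Nat.choose (2 * k) i : ℂ) *
            Kop δi (Jit δi f s') (x - δi * c) = _
        rw [Kop]
        rw [show (∫ t in (-1:ℝ)..1, Jit δi f s' (x - δi * c - δi * t))
            = ∫ t in (-1:ℝ)..1, Jit δi f s' (x - δi * (c + t)) from
          intervalIntegral.integral_congr (fun t _ => by rw [show x - δi * c - δi * t
            = x - δi * (c + t) by ring])]
        rw [intervalIntegral.integral_const_mul]
        ring
      · intro i _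
        apply Continuous.intervalIntegrable
        exact continuous_const.mul ((Jit_cont hf _ s').comp (by continuity))
    rw [hstep, norm_mul]
    have h2 : ‖(2 : ℂ)⁻¹‖ = 2⁻¹ := by rw [norm_inv]; norm_num
    rw [h2]
    have hbd : ‖∫ t in (-1:ℝ)..1, ∑ i ∈ Finset.range (2 * k + 1),
          ((-1 : ℂ) ^ ((k : ℤ) - (i : ℤ))) * (Nat.choose (2 * k) i : ℂ) *
          Jit (((i : ℝ) - (k : ℝ)) * h) f s' (x - ((i : ℝ) - (k : ℝ)) * h * (c + t))‖
        ≤ modulus (2 * k) f ((s : ℝ) * h) * |1 - (-1 : ℝ)| := by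
      apply intervalIntegral.norm_integral_le_of_norm_le_const
      intro t ht
      rw [Set.uIoc_of_le (by norm_num : (-1:ℝ) ≤ 1)] at ht
      apply IH (c + t) x
      have h3 : |c + t| ≤ |c| + |t| := abs_add_le _ _
      have h4 : |t| ≤ 1 := abs_le.mpr ⟨ht.1.le, ht.2⟩
      linarith
    rw [show |1 - (-1 : ℝ)| = 2 by norm_num] at hbd
    calc (2:ℝ)⁻¹ * ‖∫ t in (-1:ℝ)..1, ∑ i ∈ Finset.range (2 * k + 1),
          ((-1 : ℂ) ^ ((k : ℤ) - (i : ℤ))) * (Nat.choose (2 * k) i : ℂ) *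
          Jit (((i : ℝ) - (k : ℝ)) * h) f s' (x - ((i : ℝ) - (k : ℝ)) * h * (c + t))‖
        ≤ (2:ℝ)⁻¹ * (modulus (2 * k) f ((s : ℝ) * h) * 2) := by
          apply mul_le_mul_of_nonneg_left hbd (by norm_num)
      _ = modulus (2 * k) f ((s : ℝ) * h) := by ring

end Stmt8Aux


open Stmt8Aux in
/-- Bound on the smoothing operator: `sup_x |w_{x,h,2k}^s f| ≤ C(2k,k)⁻¹ ω_{2k}(f, sh)`. -/
theorem stmt8 (f : ℝ → ℂ) (hf : Continuous f) (hper : Function.Periodic f (2 * Real.pi))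
    (k s : ℕ) (hk : 1 ≤ k) (hs : 1 ≤ s) (h : ℝ) (hpos : 0 < (s : ℝ) * (k : ℝ) * h)
    (hlt : (s : ℝ) * (k : ℝ) * h < Real.pi) :
    sSup {y : ℝ | ∃ x : ℝ, y = ‖wop x h k s f‖} ≤
      ((Nat.choose (2 * k) k : ℝ))⁻¹ * modulus (2 * k) f ((s : ℝ) * h) := by
  have hπ0 := Real.pi_pos
  have hs1 : (1 : ℝ) ≤ (s : ℝ) := by exact_mod_cast hs
  have hk1 : (1 : ℝ) ≤ (k : ℝ) := by exact_mod_cast hk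
  have hsk : (0:ℝ) < (s:ℝ) * (k:ℝ) :=
    mul_pos (lt_of_lt_of_le zero_lt_one hs1) (lt_of_lt_of_le zero_lt_one hk1)
  have hh : 0 < h := by
    by_contra hcon
    push_neg at hcon
    have : (s:ℝ) * (k:ℝ) * h ≤ 0 := mul_nonpos_of_nonneg_of_nonpos hsk.le hcon
    linarith
  obtain ⟨M, hM0, hM⟩ := exists_bound hf hper
  have hω0 : 0 ≤ modulus (2 * k) f ((s : ℝ) * h) := by
    apply Real.sSup_nonneg
    rintro y ⟨x, u, _, rfl⟩
    exact norm_nonneg _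
  have hCk0 : 0 < (Nat.choose (2 * k) k : ℝ) := by
    exact_mod_cast Nat.choose_pos (by omega)
  apply Real.sSup_le _ (by positivity)
  rintro y ⟨x, rfl⟩
  -- rewrite `wop` via `Jit`
  have hIop : ∀ i ∈ Finset.range (2 * k + 1),
      Iop x (((i : ℝ) - (k : ℝ)) * h) s f = Jit (((i : ℝ) - (k : ℝ)) * h) f s x := by
    intro i hi
    have hi2k : i ≤ 2 * k := Nat.lt_succ_iff.mp (Finset.mem_range.mp hi)
    by_cases hik : (i : ℝ) - (k : ℝ) = 0
    · rw [hik, zero_mul]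
      rw [Iop, if_pos (Or.inr rfl), Jit_zero_delta]
    · have hδ0 : ((i : ℝ) - (k : ℝ)) * h ≠ 0 := mul_ne_zero hik (ne_of_gt hh)
      have hik2 : |(i : ℝ) - (k : ℝ)| ≤ (k : ℝ) := by
        rw [abs_le]
        constructor
        · have : (0 : ℝ) ≤ (i : ℝ) := Nat.cast_nonneg _
          linarith
        · have : (i : ℝ) ≤ ((2 * k : ℕ) : ℝ) := by exact_mod_cast hi2k
          push_cast at this
          linarith
      have habs : |((i : ℝ) - (k : ℝ)) * h| < Real.pi := by
        rw [abs_mul, abs_of_pos hh]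
        calc |(i : ℝ) - (k : ℝ)| * h ≤ (k : ℝ) * h :=
              mul_le_mul_of_nonneg_right hik2 hh.le
          _ ≤ (s : ℝ) * (k : ℝ) * h := by nlinarith
          _ < Real.pi := hlt
      exact Iop_eq_Jit hf hper M hM hδ0 habs s hs x
  have hwop : wop x h k s f = ((Nat.choose (2 * k) k : ℂ))⁻¹ *
      ∑ i ∈ Finset.range (2 * k + 1), ((-1 : ℂ) ^ ((k : ℤ) - (i : ℤ))) *
        (Nat.choose (2 * k) i : ℂ) * Jit (((i : ℝ) - (k : ℝ)) * h) f s x := by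
    rw [wop, Finset.mul_sum]
    apply Finset.sum_congr rfl
    intro i hi
    rw [hIop i hi]
    rw [div_eq_mul_inv]
    ring
  have hb := bound_aux hf hM k s h hh hs s 0 x (by simp)
  simp only [mul_zero, sub_zero] at hb
  rw [hwop, norm_mul, norm_inv, Complex.norm_natCast]
  exact mul_le_mul_of_nonneg_left hb (by positivity)
end
end

section
/- Let n ≥ 0, let f be a continuous 2π-periodic function whose Fourier coefficients ĉ_j(f) vanish for all |j| ≤ n, and let g ∈ L¹(T). Then the convolution satisfies ‖g * f‖_∞ ≤ (inf_{τ ∈ T_n} ‖g − τ‖₁) · ‖f‖_∞, where the infimum is over trigonometric polynomials τ of degree ≤ n and ‖·‖₁ denotes the L¹ norm ∫_T |·|du. -/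
open scoped Real BigOperators
open MeasureTheory

noncomputable section

lemma key_int (f : ℝ → ℂ) (hper : Function.Periodic f (2 * Real.pi)) (j : ℤ)
    (hj : (∫ u in (-Real.pi)..Real.pi, f u * Complex.exp (-(j : ℂ) * u * Complex.I)) = 0)
    (x : ℝ) :
    (∫ u in (-Real.pi)..Real.pi, Complex.exp ((j : ℂ) * u * Complex.I) * f (x - u)) = 0 := by
  set G : ℝ → ℂ := fun v => f v * Complex.exp (-(j : ℂ) * v * Complex.I) with hG
  have hGper : Function.Periodic G (2 * Real.pi) := by
    intro v
    simp only [hG]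
    rw [hper v]
    congr 1
    have h1 : (-(j : ℂ)) * ((v + 2 * Real.pi : ℝ) : ℂ) * Complex.I
        = (-(j : ℂ)) * (v : ℂ) * Complex.I + ((-j : ℤ) : ℂ) * (2 * (Real.pi : ℂ) * Complex.I) := by
      push_cast; ring
    rw [h1, Complex.exp_add, Complex.exp_int_mul_two_pi_mul_I, mul_one]
  have h2 : ∀ u : ℝ, Complex.exp ((j : ℂ) * u * Complex.I) * f (x - u)
      = Complex.exp ((j : ℂ) * x * Complex.I) * G (x - u) := by
    intro u
    simp only [hG]
    rw [show Complex.exp ((j : ℂ) * x * Complex.I) *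
        (f (x - u) * Complex.exp (-(j : ℂ) * ((x - u : ℝ) : ℂ) * Complex.I))
        = (Complex.exp ((j : ℂ) * x * Complex.I) *
          Complex.exp (-(j : ℂ) * ((x - u : ℝ) : ℂ) * Complex.I)) * f (x - u) by ring,
      ← Complex.exp_add]
    congr 2
    push_cast; ring
  simp only [h2]
  rw [intervalIntegral.integral_const_mul]
  have h3 : (∫ u in (-Real.pi)..Real.pi, G (x - u)) = ∫ v in (x - Real.pi)..(x + Real.pi), G v := by
    rw [intervalIntegral.integral_comp_sub_left G x]
    congr 1
    ring
  have h4 : (∫ v in (x - Real.pi)..(x + Real.pi), G v) = ∫ v in (-Real.pi)..Real.pi, G v := by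
    have := hGper.intervalIntegral_add_eq (x - Real.pi) (-Real.pi)
    have e1 : x - Real.pi + 2 * Real.pi = x + Real.pi := by ring
    have e2 : -Real.pi + 2 * Real.pi = Real.pi := by ring
    rwa [e1, e2] at this
  rw [h3, h4, hj, mul_zero]

/-- If `f ∈ C(T_n^⊥)` and `g ∈ L¹(T)`, then
`‖g * f‖_∞ ≤ (inf_{τ ∈ T_n} ‖g - τ‖₁) · ‖f‖_∞`. -/
theorem stmt9 (n : ℕ) (f : ℝ → ℂ) (hf : Continuous f)
    (hper : Function.Periodic f (2 * Real.pi))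
    (hspec : ∀ j : ℤ, |j| ≤ (n : ℤ) → fc f j = 0)
    (g : ℝ → ℂ) (hgper : Function.Periodic g (2 * Real.pi))
    (hgint : IntervalIntegrable g MeasureTheory.volume (-Real.pi) Real.pi) :
    supNorm (fun x => ∫ u in (-Real.pi)..Real.pi, g u * f (x - u)) ≤
      sInf {y : ℝ | ∃ τ : ℝ → ℂ, IsTrigPoly n τ ∧ y = L1C (fun u => g u - τ u)} *
        supNorm f := by
  have hπ : (0 : ℝ) < Real.pi := Real.pi_pos
  have hle : (-Real.pi : ℝ) ≤ Real.pi := by linarith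
  set S : Set ℝ :=
    {y : ℝ | ∃ τ : ℝ → ℂ, IsTrigPoly n τ ∧ y = L1C (fun u => g u - τ u)} with hS
  set M : ℝ := supNorm f with hM
  -- f is bounded by M
  obtain ⟨C, hC⟩ := isCompact_Icc.exists_bound_of_continuousOn (s := Set.Icc 0 (2 * Real.pi))
    hf.continuousOn
  have hbddf : BddAbove {y : ℝ | ∃ x : ℝ, y = ‖f x‖} := by
    refine ⟨C, ?_⟩
    rintro y ⟨x, rfl⟩
    have h2π : (0 : ℝ) < 2 * Real.pi := by linarith
    have hx1 : 0 ≤ x - (⌊x / (2 * Real.pi)⌋ : ℝ) * (2 * Real.pi) :=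
      Int.sub_floor_div_mul_nonneg x h2π
    have hx2 : x - (⌊x / (2 * Real.pi)⌋ : ℝ) * (2 * Real.pi) < 2 * Real.pi :=
      Int.sub_floor_div_mul_lt x h2π
    have := hC (x - (⌊x / (2 * Real.pi)⌋ : ℝ) * (2 * Real.pi)) ⟨hx1, le_of_lt hx2⟩
    rwa [hper.sub_int_mul_eq] at this
  have hfM : ∀ x : ℝ, ‖f x‖ ≤ M := fun x => le_csSup hbddf ⟨x, rfl⟩
  have hM0 : 0 ≤ M := le_trans (norm_nonneg _) (hfM 0)
  -- S is nonempty and nonnegative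
  have hSne : S.Nonempty := by
    refine ⟨L1C (fun u => g u - 0), 0, ⟨fun _ => 0, fun t => by simp⟩, rfl⟩
  have hS0 : ∀ y ∈ S, (0 : ℝ) ≤ y := by
    rintro y ⟨τ, hτ, rfl⟩
    exact intervalIntegral.integral_nonneg hle fun u _ => norm_nonneg _
  have hInf0 : 0 ≤ sInf S := le_csInf hSne hS0
  -- key pointwise bound
  have hkey : ∀ x : ℝ,
      ‖∫ u in (-Real.pi)..Real.pi, g u * f (x - u)‖ ≤ sInf S * M := by
    intro x
    have hbound : ∀ y ∈ S,
        ‖∫ u in (-Real.pi)..Real.pi, g u * f (x - u)‖ ≤ y * M := by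
      rintro y ⟨τ, ⟨c, hc⟩, rfl⟩
      have hτcont : Continuous τ := by
        have : τ = fun t : ℝ => ∑ j ∈ Finset.Icc (-(n : ℤ)) (n : ℤ),
            c j * Complex.exp ((j : ℂ) * t * Complex.I) := funext hc
        rw [this]
        exact continuous_finset_sum _ fun j _ => by fun_prop
      have hfx : Continuous fun u : ℝ => f (x - u) := hf.comp (by fun_prop)
      have hτint : IntervalIntegrable τ volume (-Real.pi) Real.pi :=
        hτcont.intervalIntegrable _ _
      have hgf : IntervalIntegrable (fun u => g u * f (x - u)) volume (-Real.pi) Real.pi :=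
        hgint.mul_continuousOn hfx.continuousOn
      have hτf : IntervalIntegrable (fun u => τ u * f (x - u)) volume (-Real.pi) Real.pi :=
        (hτcont.mul hfx).intervalIntegrable _ _
      have hzero : (∫ u in (-Real.pi)..Real.pi, τ u * f (x - u)) = 0 := by
        have heq : (fun u : ℝ => τ u * f (x - u)) = fun u : ℝ =>
            ∑ j ∈ Finset.Icc (-(n : ℤ)) (n : ℤ),
              c j * (Complex.exp ((j : ℂ) * u * Complex.I) * f (x - u)) := by
          funext u
          rw [hc u, Finset.sum_mul]
          exact Finset.sum_congr rfl fun j _ => by ring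
        rw [heq, intervalIntegral.integral_finset_sum fun j _ =>
          ((by fun_prop : Continuous fun u : ℝ =>
            c j * (Complex.exp ((j : ℂ) * u * Complex.I) * f (x - u))).intervalIntegrable _ _)]
        refine Finset.sum_eq_zero fun j hj => ?_
        rw [intervalIntegral.integral_const_mul]
        have hjn : |j| ≤ (n : ℤ) := abs_le.2 (Finset.mem_Icc.1 hj)
        have hfcj := hspec j hjn
        have hint0 : (∫ u in (-Real.pi)..Real.pi,
            f u * Complex.exp (-(j : ℂ) * u * Complex.I)) = 0 := by
          have h2πne : (2 * (Real.pi : ℂ)) ≠ 0 := by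
            simp [Real.pi_ne_zero, Complex.ofReal_ne_zero]
          have := hfcj
          rw [fc] at this
          field_simp at this
          simpa [neg_mul] using this
        rw [key_int f hper j hint0 x, mul_zero]
      have hsplit : (∫ u in (-Real.pi)..Real.pi, g u * f (x - u))
          = ∫ u in (-Real.pi)..Real.pi, (g u - τ u) * f (x - u) := by
        rw [show (fun u : ℝ => (g u - τ u) * f (x - u))
            = fun u => g u * f (x - u) - τ u * f (x - u) by funext u; ring,
          intervalIntegral.integral_sub hgf hτf, hzero, sub_zero]
      rw [hsplit]
      have hgτf : IntervalIntegrable (fun u => (g u - τ u) * f (x - u))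
          volume (-Real.pi) Real.pi := (hgint.sub hτint).mul_continuousOn hfx.continuousOn
      calc ‖∫ u in (-Real.pi)..Real.pi, (g u - τ u) * f (x - u)‖
          ≤ ∫ u in (-Real.pi)..Real.pi, ‖(g u - τ u) * f (x - u)‖ := by
            exact intervalIntegral.norm_integral_le_integral_norm hle
        _ ≤ ∫ u in (-Real.pi)..Real.pi, ‖g u - τ u‖ * M := by
            refine intervalIntegral.integral_mono_on hle hgτf.norm
              (((hgint.sub hτint).norm).mul_const M) fun u _ => ?_
            rw [norm_mul]
            exact mul_le_mul_of_nonneg_left (hfM _) (norm_nonneg _)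
        _ = L1C (fun u => g u - τ u) * M := by
            rw [L1C, ← intervalIntegral.integral_mul_const]
    rcases eq_or_lt_of_le hM0 with hMeq | hMpos
    · obtain ⟨y₀, hy₀⟩ := hSne
      have := hbound y₀ hy₀
      rw [← hMeq] at this ⊢
      simpa using this
    · have hdiv : ‖∫ u in (-Real.pi)..Real.pi, g u * f (x - u)‖ / M ≤ sInf S :=
        le_csInf hSne fun y hy => (div_le_iff₀ hMpos).2 (hbound y hy)
      exact (div_le_iff₀ hMpos).1 hdiv
  rw [supNorm]
  exact Real.sSup_le (by rintro y ⟨x, rfl⟩; exact hkey x) (mul_nonneg hInf0 hM0)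
end
end

section
/- Let f be a continuous 2π-periodic function, k ≥ 1, m ≥ 1, and δ > 0. Then the de la Vallée Poussin mean v_{k,m}f satisfies ω_{2k}(v_{k,m}f, δ) ≤ (2k+1) · ω_{2k}(f, δ). -/
open scoped Real BigOperators
open MeasureTheory

noncomputable section

namespace Stmt14aux

open Complex Finset

noncomputable def G (N : ℕ) (v : ℝ) : ℂ := ∑ i ∈ Finset.range N, Complex.exp ((i : ℂ) * v * I)

noncomputable def DD (i : ℕ) (v : ℝ) : ℂ :=
  ∑ l ∈ Finset.Icc (-(i : ℤ)) (i : ℤ), Complex.exp ((l : ℂ) * v * I)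

lemma sum_DD (N : ℕ) (v : ℝ) :
    ∑ i ∈ Finset.range N, DD i v = G N v * G N (-v) := by
  unfold DD G
  rw [Finset.sum_mul_sum]
  conv_lhs => rw [Finset.sum_sigma' (Finset.range N) (fun i => Finset.Icc (-(i:ℤ)) (i:ℤ))
    (fun i l => Complex.exp ((l : ℂ) * v * I))]
  conv_rhs => rw [← Finset.sum_product']
  refine Finset.sum_nbij'
    (fun p => ((((p.1 : ℤ) + min p.2 0).toNat, ((p.1 : ℤ) - max p.2 0).toNat) : ℕ × ℕ))
    (fun q => (⟨max q.1 q.2, (q.1 : ℤ) - (q.2 : ℤ)⟩ : Σ _ : ℕ, ℤ)) ?_ ?_ ?_ ?_ ?_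
  · rintro ⟨i, l⟩ hp
    simp only [Finset.mem_sigma, Finset.mem_range, Finset.mem_Icc] at hp ⊢
    simp only [Finset.mem_product, Finset.mem_range]
    omega
  · rintro ⟨a, b⟩ hq
    simp only [Finset.mem_product, Finset.mem_range] at hq
    simp only [Finset.mem_sigma, Finset.mem_range, Finset.mem_Icc]
    omega
  · rintro ⟨i, l⟩ hp
    simp only [Finset.mem_sigma, Finset.mem_range, Finset.mem_Icc] at hp
    have h1 : max (((i : ℤ) + min l 0).toNat) (((i : ℤ) - max l 0).toNat) = i := by omega
    have h2 : ((((i : ℤ) + min l 0).toNat : ℕ) : ℤ) - ((((i : ℤ) - max l 0).toNat : ℕ) : ℤ) = l := by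
      omega
    dsimp only
    rw [h1, h2]
  · rintro ⟨a, b⟩ hq
    simp only [Finset.mem_product, Finset.mem_range] at hq
    simp only [Prod.mk.injEq]
    omega
  · rintro ⟨i, l⟩ hp
    simp only [Finset.mem_sigma, Finset.mem_range, Finset.mem_Icc] at hp
    dsimp only
    rw [← Complex.exp_add]
    congr 1
    have ha' : (((i : ℤ) + min l 0).toNat : ℤ) = (i : ℤ) + min l 0 := Int.toNat_of_nonneg (by omega)
    have hb' : (((i : ℤ) - max l 0).toNat : ℤ) = (i : ℤ) - max l 0 := Int.toNat_of_nonneg (by omega)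
    have ha : ((((i : ℤ) + min l 0).toNat : ℕ) : ℂ) = (i : ℂ) + ((min l 0 : ℤ) : ℂ) := by
      rw [← Int.cast_natCast (R := ℂ), ha']; push_cast; ring
    have hb : ((((i : ℤ) - max l 0).toNat : ℕ) : ℂ) = (i : ℂ) - ((max l 0 : ℤ) : ℂ) := by
      rw [← Int.cast_natCast (R := ℂ), hb']; push_cast; ring
    rw [ha, hb]
    have hm : ((min l 0 : ℤ) : ℂ) + ((max l 0 : ℤ) : ℂ) = (l : ℂ) := by
      norm_cast; omega
    push_cast
    linear_combination (-(v:ℂ)) * Complex.I * hm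

noncomputable def KK (N : ℕ) (v : ℝ) : ℝ := Complex.normSq (G N v)

lemma KK_nonneg (N : ℕ) (v : ℝ) : 0 ≤ KK N v := Complex.normSq_nonneg _

lemma G_neg (N : ℕ) (v : ℝ) : G N (-v) = starRingEnd ℂ (G N v) := by
  unfold G
  rw [map_sum]
  refine Finset.sum_congr rfl fun i _ => ?_
  rw [← Complex.exp_conj]
  congr 1
  simp only [map_mul, Complex.conj_ofReal, Complex.conj_I, Complex.conj_natCast,
    Complex.ofReal_neg]
  ring

lemma sum_DD' (N : ℕ) (v : ℝ) :
    ∑ i ∈ Finset.range N, DD i v = ((KK N v : ℝ) : ℂ) := by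
  rw [sum_DD, G_neg, Complex.mul_conj, KK]

lemma cont_G (N : ℕ) : Continuous (G N) := by
  unfold G
  exact continuous_finset_sum _ fun i _ => Complex.continuous_exp.comp (by fun_prop)

lemma cont_KK (N : ℕ) : Continuous (KK N) := Complex.continuous_normSq.comp (cont_G N)

lemma cont_DD (i : ℕ) : Continuous (DD i) := by
  unfold DD
  exact continuous_finset_sum _ fun l _ => Complex.continuous_exp.comp (by fun_prop)

lemma DD_periodic (i : ℕ) : Function.Periodic (DD i) (2 * Real.pi) := by
  intro v
  unfold DD
  refine Finset.sum_congr rfl fun l _ => ?_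
  rw [show ((l : ℂ) * ((v : ℝ) + 2 * Real.pi : ℝ) * Complex.I)
      = (l : ℂ) * (v : ℝ) * Complex.I + (l : ℤ) * (2 * Real.pi * Complex.I) by push_cast; ring,
    Complex.exp_add, Complex.exp_int_mul_two_pi_mul_I, mul_one]

lemma PS_eq (f : ℝ → ℂ) (hf : Continuous f) (i : ℕ) (x : ℝ) :
    PS i f x = (1 / (2 * (Real.pi : ℂ))) * ∫ u in (-Real.pi)..Real.pi, f u * DD i (x - u) := by
  have hstep : ∀ l : ℤ, fc f l * Complex.exp ((l:ℂ) * x * Complex.I)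
      = (1 / (2 * (Real.pi : ℂ))) * ∫ u in (-Real.pi)..Real.pi,
          f u * Complex.exp ((l:ℂ) * ((x - u : ℝ) : ℂ) * Complex.I) := by
    intro l
    unfold fc
    rw [mul_assoc]
    congr 1
    rw [← intervalIntegral.integral_mul_const]
    refine intervalIntegral.integral_congr fun u _ => ?_
    rw [mul_assoc, ← Complex.exp_add]
    congr 2
    push_cast
    ring
  unfold PS
  rw [Finset.sum_congr rfl fun l _ => hstep l, ← Finset.mul_sum]
  congr 1
  rw [← intervalIntegral.integral_finset_sum
    (fun l _ => Continuous.intervalIntegrable (by fun_prop) _ _)]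
  refine intervalIntegral.integral_congr fun u _ => ?_
  unfold DD
  rw [Finset.mul_sum]

lemma integral_shift (F : ℝ → ℂ) (hp : Function.Periodic F (2 * Real.pi)) (a : ℝ) :
    ∫ u in (-Real.pi)..Real.pi, F (u + a) = ∫ u in (-Real.pi)..Real.pi, F u := by
  rw [intervalIntegral.integral_comp_add_right]
  have h2 := hp.intervalIntegral_add_eq (-Real.pi + a) (-Real.pi)
  rw [show -Real.pi + a + 2 * Real.pi = Real.pi + a by ring,
    show -Real.pi + 2 * Real.pi = Real.pi by ring] at h2
  exact h2

lemma PS_shift (f : ℝ → ℂ) (hf : Continuous f) (hper : Function.Periodic f (2 * Real.pi))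
    (i : ℕ) (x a : ℝ) :
    PS i f (x + a) = (1 / (2 * (Real.pi : ℂ))) *
      ∫ u in (-Real.pi)..Real.pi, f (u + a) * DD i (x - u) := by
  rw [PS_eq f hf i (x + a)]
  congr 1
  have hp : Function.Periodic (fun u => f u * DD i (x + a - u)) (2 * Real.pi) := by
    intro v
    dsimp only
    rw [hper v, show x + a - (v + 2 * Real.pi) = x + a - v - 2 * Real.pi by ring]
    congr 1
    have := DD_periodic i (x + a - v - 2 * Real.pi)
    rw [show x + a - v - 2 * Real.pi + 2 * Real.pi = x + a - v by ring] at this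
    rw [this]
  have := integral_shift _ hp a
  rw [← this]
  refine intervalIntegral.integral_congr fun u _ => ?_
  rw [show x + a - (u + a) = x - u by ring]

lemma cont_deltaC (m' : ℕ) (h : ℝ) (f : ℝ → ℂ) (hf : Continuous f) :
    Continuous (deltaC m' h f) := by
  unfold deltaC
  exact continuous_finset_sum _ fun t _ => continuous_const.mul (hf.comp (by fun_prop))

lemma deltaC_PS (f : ℝ → ℂ) (hf : Continuous f) (hper : Function.Periodic f (2 * Real.pi))
    (m' : ℕ) (h : ℝ) (i : ℕ) (x : ℝ) :
    deltaC m' h (PS i f) x = (1 / (2 * (Real.pi : ℂ))) *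
      ∫ u in (-Real.pi)..Real.pi, deltaC m' h f u * DD i (x - u) := by
  have key : ∀ t : ℕ, PS i f (x - ((m' : ℝ) / 2) * h + (t : ℝ) * h)
      = (1 / (2 * (Real.pi : ℂ))) *
        ∫ u in (-Real.pi)..Real.pi,
          f (u + (-(((m' : ℝ) / 2) * h) + (t : ℝ) * h)) * DD i (x - u) := by
    intro t
    rw [show x - ((m' : ℝ) / 2) * h + (t : ℝ) * h
        = x + (-(((m' : ℝ) / 2) * h) + (t : ℝ) * h) by ring]
    exact PS_shift f hf hper i x _
  unfold deltaC
  have hterm : ∀ t ∈ Finset.range (m' + 1),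
      ((-1 : ℂ) ^ (m' - t)) * (Nat.choose m' t : ℂ) * PS i f (x - ((m' : ℝ) / 2) * h + (t : ℝ) * h)
      = (1 / (2 * (Real.pi : ℂ))) * ∫ u in (-Real.pi)..Real.pi,
          (((-1 : ℂ) ^ (m' - t)) * (Nat.choose m' t : ℂ)
            * f (u - ((m' : ℝ) / 2) * h + (t : ℝ) * h)) * DD i (x - u) := by
    intro t _
    rw [key t]
    rw [← mul_assoc, mul_comm _ (1 / (2 * (Real.pi : ℂ))), mul_assoc,
      ← intervalIntegral.integral_const_mul]
    congr 1
    refine intervalIntegral.integral_congr fun u _ => ?_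
    rw [show u - ((m' : ℝ) / 2) * h + (t : ℝ) * h
        = u + (-(((m' : ℝ) / 2) * h) + (t : ℝ) * h) by ring]
    ring
  rw [Finset.sum_congr rfl hterm, ← Finset.mul_sum]
  congr 1
  have hint : ∀ t ∈ Finset.range (m' + 1), IntervalIntegrable
      (fun u => (((-1 : ℂ) ^ (m' - t)) * (Nat.choose m' t : ℂ)
        * f (u - ((m' : ℝ) / 2) * h + (t : ℝ) * h)) * DD i (x - u))
      MeasureTheory.volume (-Real.pi) Real.pi :=
    fun t _ => Continuous.intervalIntegrable
      ((continuous_const.mul (hf.comp (by fun_prop))).mul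
        ((cont_DD i).comp (by fun_prop))) _ _
  rw [← intervalIntegral.integral_finset_sum hint]
  refine intervalIntegral.integral_congr fun u _ => ?_
  rw [← Finset.sum_mul]

lemma deltaC_VP (f : ℝ → ℂ) (hf : Continuous f) (hper : Function.Periodic f (2 * Real.pi))
    (k m m' : ℕ) (h x : ℝ) :
    deltaC m' h (VP k m f) x = (1 / (m : ℂ)) * ((1 / (2 * (Real.pi : ℂ))) *
      ∫ u in (-Real.pi)..Real.pi, deltaC m' h f u *
        (((KK ((k + 1) * m) (x - u) : ℝ) : ℂ) - ((KK (k * m) (x - u) : ℝ) : ℂ))) := by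
  have h1 : deltaC m' h (VP k m f) x
      = (1 / (m : ℂ)) * ∑ i ∈ Finset.Ico (k * m) ((k + 1) * m), deltaC m' h (PS i f) x := by
    unfold deltaC VP
    simp only [Finset.mul_sum]
    rw [Finset.sum_comm]
    exact Finset.sum_congr rfl fun i _ => Finset.sum_congr rfl fun t _ => by ring
  rw [h1]
  congr 1
  rw [Finset.sum_congr rfl fun i _ => deltaC_PS f hf hper m' h i x, ← Finset.mul_sum]
  congr 1
  have hint : ∀ i ∈ Finset.Ico (k * m) ((k + 1) * m), IntervalIntegrable
      (fun u => deltaC m' h f u * DD i (x - u)) MeasureTheory.volume (-Real.pi) Real.pi :=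
    fun i _ => Continuous.intervalIntegrable
      ((cont_deltaC m' h f hf).mul ((cont_DD i).comp (by fun_prop))) _ _
  rw [← intervalIntegral.integral_finset_sum hint]
  refine intervalIntegral.integral_congr fun u _ => ?_
  rw [← Finset.mul_sum]
  congr 1
  rw [Finset.sum_Ico_eq_sub _ (by nlinarith : k * m ≤ (k + 1) * m), sum_DD', sum_DD']

lemma DD_mass (i : ℕ) (x : ℝ) :
    ∫ u in (-Real.pi)..Real.pi, DD i (x - u) = 2 * (Real.pi : ℂ) := by
  unfold DD
  have hint : ∀ l ∈ Finset.Icc (-(i : ℤ)) (i : ℤ), IntervalIntegrable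
      (fun u : ℝ => Complex.exp ((l : ℂ) * ((x - u : ℝ) : ℂ) * Complex.I))
      MeasureTheory.volume (-Real.pi) Real.pi :=
    fun l _ => Continuous.intervalIntegrable (Complex.continuous_exp.comp (by fun_prop)) _ _
  rw [intervalIntegral.integral_finset_sum hint]
  rw [Finset.sum_eq_single_of_mem 0 (by simp)]
  · simp only [Int.cast_zero, zero_mul, Complex.exp_zero, intervalIntegral.integral_const,
      sub_neg_eq_add, smul_eq_mul, mul_one, Complex.real_smul]
    push_cast
    ring
  · intro l _ hl
    have hl' : (l : ℂ) ≠ 0 := Int.cast_ne_zero.mpr hl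
    have hc : (-(l : ℂ) * Complex.I) ≠ 0 := by
      simp [hl', Complex.I_ne_zero]
    have hrw : ∀ u : ℝ, Complex.exp ((l : ℂ) * ((x - u : ℝ) : ℂ) * Complex.I)
        = Complex.exp ((l : ℂ) * (x : ℝ) * Complex.I)
          * Complex.exp ((-(l : ℂ) * Complex.I) * (u : ℂ)) := by
      intro u
      rw [← Complex.exp_add]
      congr 1
      push_cast
      ring
    rw [intervalIntegral.integral_congr (fun u _ => hrw u),
      intervalIntegral.integral_const_mul, integral_exp_mul_complex hc]
    have he : Complex.exp ((-(l : ℂ) * Complex.I) * ((Real.pi : ℝ) : ℂ))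
        = Complex.exp ((-(l : ℂ) * Complex.I) * ((-Real.pi : ℝ) : ℂ)) := by
      rw [show ((-(l : ℂ) * Complex.I) * ((Real.pi : ℝ) : ℂ))
          = (-(l : ℂ) * Complex.I) * ((-Real.pi : ℝ) : ℂ) + (-l : ℤ) * (2 * Real.pi * Complex.I)
          by push_cast; ring]
      rw [Complex.exp_add, Complex.exp_int_mul_two_pi_mul_I, mul_one]
    rw [he, sub_self, zero_div, mul_zero]

lemma KK_massC (N : ℕ) (x : ℝ) :
    ∫ u in (-Real.pi)..Real.pi, ((KK N (x - u) : ℝ) : ℂ) = 2 * (Real.pi : ℂ) * N := by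
  have hcong : ∀ u ∈ Set.uIcc (-Real.pi) Real.pi,
      ((KK N (x - u) : ℝ) : ℂ) = ∑ i ∈ Finset.range N, DD i (x - u) :=
    fun u _ => (sum_DD' N _).symm
  have hint : ∀ i ∈ Finset.range N, IntervalIntegrable
      (fun u : ℝ => DD i (x - u)) MeasureTheory.volume (-Real.pi) Real.pi :=
    fun i _ => Continuous.intervalIntegrable ((cont_DD i).comp (by fun_prop)) _ _
  rw [intervalIntegral.integral_congr hcong, intervalIntegral.integral_finset_sum hint]
  rw [Finset.sum_congr rfl fun i _ => DD_mass i x, Finset.sum_const, Finset.card_range,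
    nsmul_eq_mul]
  ring

lemma KK_massR (N : ℕ) (x : ℝ) :
    ∫ u in (-Real.pi)..Real.pi, KK N (x - u) = 2 * Real.pi * N := by
  have h := KK_massC N x
  rw [intervalIntegral.integral_ofReal] at h
  exact_mod_cast h

lemma f_bound (f : ℝ → ℂ) (hf : Continuous f) (hper : Function.Periodic f (2 * Real.pi)) :
    ∃ C : ℝ, 0 ≤ C ∧ ∀ x, ‖f x‖ ≤ C := by
  obtain ⟨C, hC⟩ := (isCompact_Icc (a := (0 : ℝ)) (b := 2 * Real.pi)).exists_bound_of_continuousOn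
    hf.continuousOn
  refine ⟨max C 0, le_max_right _ _, fun x => ?_⟩
  obtain ⟨y, hy, hxy⟩ := hper.exists_mem_Ico₀ (by positivity) x
  calc ‖f x‖ = ‖f y‖ := by rw [hxy]
  _ ≤ C := hC y ⟨hy.1, hy.2.le⟩
  _ ≤ max C 0 := le_max_left _ _

lemma deltaC_bound (m' : ℕ) (C : ℝ) (f : ℝ → ℂ) (hC : ∀ x, ‖f x‖ ≤ C)
    (h x : ℝ) :
    ‖deltaC m' h f x‖ ≤ ∑ t ∈ Finset.range (m' + 1), (Nat.choose m' t : ℝ) * C := by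
  unfold deltaC
  refine le_trans (norm_sum_le _ _) (Finset.sum_le_sum fun t _ => ?_)
  rw [norm_mul, norm_mul, norm_pow, norm_neg, norm_one, one_pow, one_mul,
    Complex.norm_natCast]
  exact mul_le_mul_of_nonneg_left (hC _) (by positivity)

end Stmt14aux

open Stmt14aux
/-- The de la Vallée Poussin mean does not increase smoothness by more than a factor
`2k+1`: `ω_{2k}(v_{k,m}f, δ) ≤ (2k+1) ω_{2k}(f, δ)`. -/
theorem stmt14 (f : ℝ → ℂ) (hf : Continuous f) (hper : Function.Periodic f (2 * Real.pi))
    (k m : ℕ) (hk : 1 ≤ k) (hm : 1 ≤ m) (δ : ℝ) (hδ : 0 < δ) :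
    modulus (2 * k) (VP k m f) δ ≤ (2 * (k : ℝ) + 1) * modulus (2 * k) f δ := by
  have hπ : (0 : ℝ) < Real.pi := Real.pi_pos
  obtain ⟨C, hC0, hC⟩ := f_bound f hf hper
  have hbdd : BddAbove {y : ℝ | ∃ x h : ℝ, |h| < δ ∧ y = ‖deltaC (2 * k) h f x‖} :=
    ⟨∑ t ∈ Finset.range (2 * k + 1), (Nat.choose (2 * k) t : ℝ) * C, by
      rintro y ⟨x, h, _, rfl⟩; exact deltaC_bound (2 * k) C f hC h x⟩
  have hle : ∀ (h u : ℝ), |h| < δ → ‖deltaC (2 * k) h f u‖ ≤ modulus (2 * k) f δ :=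
    fun h u hh => le_csSup hbdd ⟨u, h, hh, rfl⟩
  have hM0 : 0 ≤ modulus (2 * k) f δ :=
    le_trans (norm_nonneg _) (hle 0 0 (by simpa using hδ))
  set M := modulus (2 * k) f δ with hMdef
  unfold modulus
  refine Real.sSup_le ?_ (mul_nonneg (by positivity) hM0)
  rintro y ⟨x, h, hh, rfl⟩
  rw [deltaC_VP f hf hper k m (2 * k) h x]
  rw [norm_mul, norm_mul]
  have e1 : ‖(1 / (m : ℂ))‖ = 1 / (m : ℝ) := by
    rw [norm_div, norm_one, Complex.norm_natCast]
  have e2 : ‖(1 / (2 * (Real.pi : ℂ)))‖ = 1 / (2 * Real.pi) := by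
    rw [show (2 * (Real.pi : ℂ)) = ((2 * Real.pi : ℝ) : ℂ) by push_cast; ring,
      norm_div, norm_one, Complex.norm_real, Real.norm_eq_abs, abs_of_pos (by positivity)]
  rw [e1, e2]
  set N1 := (k + 1) * m with hN1
  set N2 := k * m with hN2
  set g : ℝ → ℂ := deltaC (2 * k) h f with hg
  have hgc : Continuous g := cont_deltaC _ _ _ hf
  have hc1 : Continuous fun u : ℝ => KK N1 (x - u) := (cont_KK N1).comp (by fun_prop)
  have hc2 : Continuous fun u : ℝ => KK N2 (x - u) := (cont_KK N2).comp (by fun_prop)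
  have hcφ : Continuous fun u : ℝ =>
      g u * (((KK N1 (x - u) : ℝ) : ℂ) - ((KK N2 (x - u) : ℝ) : ℂ)) :=
    hgc.mul ((Complex.continuous_ofReal.comp hc1).sub (Complex.continuous_ofReal.comp hc2))
  have hab : (-Real.pi) ≤ Real.pi := by linarith
  have hptw : ∀ u ∈ Set.Icc (-Real.pi) Real.pi,
      ‖g u * (((KK N1 (x - u) : ℝ) : ℂ) - ((KK N2 (x - u) : ℝ) : ℂ))‖
        ≤ M * (KK N1 (x - u) + KK N2 (x - u)) := by
    intro u _
    rw [norm_mul, show (((KK N1 (x - u) : ℝ) : ℂ) - ((KK N2 (x - u) : ℝ) : ℂ))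
        = ((KK N1 (x - u) - KK N2 (x - u) : ℝ) : ℂ) by push_cast; ring,
      Complex.norm_real, Real.norm_eq_abs]
    have h1 := KK_nonneg N1 (x - u)
    have h2 := KK_nonneg N2 (x - u)
    have habs : |KK N1 (x - u) - KK N2 (x - u)| ≤ KK N1 (x - u) + KK N2 (x - u) := by
      rw [abs_le]; constructor <;> linarith
    have hgu : ‖g u‖ ≤ M := hle h u hh
    exact mul_le_mul hgu habs (abs_nonneg _) hM0
  have hInorm : IntervalIntegrable
      (fun u => ‖g u * (((KK N1 (x - u) : ℝ) : ℂ) - ((KK N2 (x - u) : ℝ) : ℂ))‖)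
      MeasureTheory.volume (-Real.pi) Real.pi := hcφ.norm.intervalIntegrable _ _
  have hIrhs : IntervalIntegrable (fun u => M * (KK N1 (x - u) + KK N2 (x - u)))
      MeasureTheory.volume (-Real.pi) Real.pi :=
    (continuous_const.mul (hc1.add hc2)).intervalIntegrable _ _
  have hI : (∫ u in (-Real.pi)..Real.pi, M * (KK N1 (x - u) + KK N2 (x - u)))
      = M * (2 * Real.pi * N1 + 2 * Real.pi * N2) := by
    rw [intervalIntegral.integral_const_mul]
    congr 1
    rw [intervalIntegral.integral_add (hc1.intervalIntegrable _ _) (hc2.intervalIntegrable _ _),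
      KK_massR, KK_massR]
  have hIle : ‖∫ u in (-Real.pi)..Real.pi,
      g u * (((KK N1 (x - u) : ℝ) : ℂ) - ((KK N2 (x - u) : ℝ) : ℂ))‖
        ≤ M * (2 * Real.pi * N1 + 2 * Real.pi * N2) := by
    refine le_trans (intervalIntegral.norm_integral_le_integral_norm hab) ?_
    rw [← hI]
    exact intervalIntegral.integral_mono_on hab hInorm hIrhs hptw
  calc (1 / (m : ℝ)) * ((1 / (2 * Real.pi)) * ‖∫ u in (-Real.pi)..Real.pi,
        g u * (((KK N1 (x - u) : ℝ) : ℂ) - ((KK N2 (x - u) : ℝ) : ℂ))‖)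
      ≤ (1 / (m : ℝ)) * ((1 / (2 * Real.pi)) * (M * (2 * Real.pi * N1 + 2 * Real.pi * N2))) := by
        have hm' : (0:ℝ) < m := by exact_mod_cast hm
        gcongr
  _ = (2 * (k : ℝ) + 1) * M := by
        have hm' : (m : ℝ) ≠ 0 := by positivity
        rw [hN1, hN2]
        push_cast
        field_simp
        ring
end
end
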